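/- arXiv:0807.0245 — 7 statements merged into one kernel-verified Lean document; each statement's English description precedes it below -/
import Mathlib

section
/- Let L and K be positive integers. There exist real constants C_Tmin and C_Tmax with 0 < C_Tmin ≤ C_Tmax ≤ 1, depending only on L and K, such that for every nonzero α ∈ ℂ^L: C_Tmin·‖α‖^(2K) ≤ det(T(α,L,K)ᴴ T(α,L,K)) ≤ C_Tmax·‖α‖^(2K). -/
open Matrix

/-- The `(K+L−1) × K` Toeplitz matrix generated by `α ∈ ℂ^L`: its `(i,j)` entry (0-based)
is `α (i−j)` when `0 ≤ i−j ≤ L−1` and `0` otherwise. -/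
noncomputable def Toep (L K : ℕ) (α : Fin L → ℂ) : Matrix (Fin (K + L - 1)) (Fin K) ℂ :=
  Matrix.of fun i j =>
    if h : (j : ℕ) ≤ (i : ℕ) ∧ (i : ℕ) - (j : ℕ) < L
    then α ⟨(i : ℕ) - (j : ℕ), h.2⟩ else 0

section Aux

open scoped ComplexOrder

lemma Toep_smul (L K : ℕ) (c : ℂ) (α : Fin L → ℂ) :
    Toep L K (c • α) = c • Toep L K α := by
  ext i j
  simp only [Toep, Matrix.of_apply, Matrix.smul_apply, Pi.smul_apply, smul_eq_mul]
  split <;> simp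

lemma Toep_continuous (L K : ℕ) :
    Continuous fun α : EuclideanSpace ℂ (Fin L) => Toep L K α := by
  apply continuous_matrix
  intro i j
  simp only [Toep, Matrix.of_apply]
  split
  · exact (EuclideanSpace.proj _).continuous
  · exact continuous_const

lemma f_continuous (L K : ℕ) :
    Continuous fun α : EuclideanSpace ℂ (Fin L) =>
      ((Toep L K α)ᴴ * Toep L K α).det.re :=
  Complex.continuous_re.comp
    (((Toep_continuous L K).matrix_conjTranspose.matrix_mul
      (Toep_continuous L K)).matrix_det)

lemma Toep_mulVec_eq_zero (L K : ℕ) (hL : 0 < L) (hK : 0 < K)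
    {α : Fin L → ℂ} (hα : α ≠ 0) {x : Fin K → ℂ}
    (hx : Toep L K α *ᵥ x = 0) : x = 0 := by
  by_contra hx0
  have hαs : (Finset.univ.filter fun i : Fin L => α i ≠ 0).Nonempty := by
    obtain ⟨i, hi⟩ := Function.ne_iff.mp hα
    exact ⟨i, by simpa using hi⟩
  have hxs : (Finset.univ.filter fun j : Fin K => x j ≠ 0).Nonempty := by
    obtain ⟨j, hj⟩ := Function.ne_iff.mp hx0
    exact ⟨j, by simpa using hj⟩
  set i0 := (Finset.univ.filter fun i : Fin L => α i ≠ 0).min' hαs with hi0def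
  set j0 := (Finset.univ.filter fun j : Fin K => x j ≠ 0).min' hxs with hj0def
  have hi0 : α i0 ≠ 0 := by
    have := (Finset.univ.filter fun i : Fin L => α i ≠ 0).min'_mem hαs
    simpa using this
  have hj0 : x j0 ≠ 0 := by
    have := (Finset.univ.filter fun j : Fin K => x j ≠ 0).min'_mem hxs
    simpa using this
  have hαmin : ∀ i : Fin L, (i : ℕ) < (i0 : ℕ) → α i = 0 := by
    intro i hi
    by_contra h
    have : i0 ≤ i := Finset.min'_le _ _ (by simp [h])
    omega
  have hxmin : ∀ j : Fin K, (j : ℕ) < (j0 : ℕ) → x j = 0 := by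
    intro j hj
    by_contra h
    have : j0 ≤ j := Finset.min'_le _ _ (by simp [h])
    omega
  have hlt : (i0 : ℕ) + (j0 : ℕ) < K + L - 1 := by
    have := i0.isLt; have := j0.isLt; omega
  set I : Fin (K + L - 1) := ⟨(i0 : ℕ) + (j0 : ℕ), hlt⟩ with hIdef
  have key : (Toep L K α *ᵥ x) I = α i0 * x j0 := by
    rw [Matrix.mulVec]
    show (Finset.univ.sum fun j => Toep L K α I j * x j) = α i0 * x j0
    rw [Finset.sum_eq_single j0]
    · simp only [Toep, Matrix.of_apply]
      have hc : (j0 : ℕ) ≤ (I : ℕ) ∧ (I : ℕ) - (j0 : ℕ) < L :=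
        ⟨Nat.le_add_left _ _, by
          show (i0 : ℕ) + (j0 : ℕ) - (j0 : ℕ) < L
          have := i0.isLt; omega⟩
      rw [dif_pos hc]
      have : (⟨(I : ℕ) - (j0 : ℕ), hc.2⟩ : Fin L) = i0 := by
        apply Fin.ext
        show (i0 : ℕ) + (j0 : ℕ) - (j0 : ℕ) = (i0 : ℕ)
        omega
      rw [this]
    · intro j _ hj
      rcases lt_or_gt_of_ne (fun h : (j : ℕ) = (j0 : ℕ) => hj (Fin.ext h)) with h | h
      · rw [hxmin j h, mul_zero]
      · simp only [Toep, Matrix.of_apply]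
        split
        · rename_i hcond
          have hlt2 : ((I : ℕ) - (j : ℕ)) < (i0 : ℕ) := by
            show (i0 : ℕ) + (j0 : ℕ) - (j : ℕ) < (i0 : ℕ)
            have hle : (j : ℕ) ≤ (i0 : ℕ) + (j0 : ℕ) := hcond.1
            omega
          rw [hαmin ⟨_, hcond.2⟩ hlt2, zero_mul]
        · rw [zero_mul]
    · intro h
      exact absurd (Finset.mem_univ j0) h
  rw [hx] at key
  exact (mul_ne_zero hi0 hj0) key.symm

lemma Toep_posDef (L K : ℕ) (hL : 0 < L) (hK : 0 < K)
    {α : Fin L → ℂ} (hα : α ≠ 0) :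
    ((Toep L K α)ᴴ * Toep L K α).PosDef := by
  refine Matrix.PosDef.of_dotProduct_mulVec_pos (isHermitian_conjTranspose_mul_self _) fun x hx => ?_
  have h1 : dotProduct (star x) (((Toep L K α)ᴴ * Toep L K α) *ᵥ x)
      = dotProduct (star (Toep L K α *ᵥ x)) (Toep L K α *ᵥ x) := by
    rw [← mulVec_mulVec, dotProduct_mulVec, vecMul_conjTranspose, star_star]
  rw [h1]
  exact Matrix.dotProduct_star_self_pos_iff.mpr
    (fun h0 => hx (Toep_mulVec_eq_zero L K hL hK hα h0))

lemma f_pos (L K : ℕ) (hL : 0 < L) (hK : 0 < K)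
    {α : Fin L → ℂ} (hα : α ≠ 0) :
    0 < ((Toep L K α)ᴴ * Toep L K α).det.re := by
  have h := (Toep_posDef L K hL hK hα).det_pos
  have := (Complex.lt_def.mp h).1
  simpa using this

lemma sum_eigenvalues_eq_trace' {n : Type*} [Fintype n] [DecidableEq n]
    {A : Matrix n n ℂ} (hA : A.IsHermitian) :
    A.trace = ((Finset.univ.sum fun i => hA.eigenvalues i : ℝ) : ℂ) := by
  rw [hA.trace_eq_sum_eigenvalues]
  push_cast
  rfl

lemma Toep_col_sum (L K : ℕ) (hK : 0 < K) (α : Fin L → ℂ) (j : Fin K) :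
    (Finset.univ.sum fun i : Fin (K + L - 1) =>
      star (Toep L K α i j) * Toep L K α i j)
      = Finset.univ.sum fun l : Fin L => star (α l) * α l := by
  have hemb : ∀ l : Fin L, (j : ℕ) + (l : ℕ) < K + L - 1 := by
    intro l; have := l.isLt; have := j.isLt; omega
  set e : Fin L ↪ Fin (K + L - 1) :=
    ⟨fun l => ⟨(j : ℕ) + (l : ℕ), hemb l⟩, by
      intro a b hab
      apply Fin.ext
      have : (j : ℕ) + (a : ℕ) = (j : ℕ) + (b : ℕ) := congrArg Fin.val hab
      omega⟩ with hedef
  have heval : ∀ l : Fin L, Toep L K α (e l) j = α l := by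
    intro l
    simp only [Toep, Matrix.of_apply]
    have hc : (j : ℕ) ≤ ((e l) : ℕ) ∧ ((e l) : ℕ) - (j : ℕ) < L :=
      ⟨Nat.le_add_right _ _, by
        show (j : ℕ) + (l : ℕ) - (j : ℕ) < L
        have := l.isLt; omega⟩
    rw [dif_pos hc]
    congr 1
    apply Fin.ext
    show (j : ℕ) + (l : ℕ) - (j : ℕ) = (l : ℕ)
    omega
  calc (Finset.univ.sum fun i : Fin (K + L - 1) =>
        star (Toep L K α i j) * Toep L K α i j)
      = (Finset.univ.map e).sum (fun i => star (Toep L K α i j) * Toep L K α i j) := by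
        symm
        apply Finset.sum_subset (Finset.subset_univ _)
        intro i _ hi
        have hcond : ¬((j : ℕ) ≤ (i : ℕ) ∧ (i : ℕ) - (j : ℕ) < L) := by
          intro hc
          apply hi
          rw [Finset.mem_map]
          refine ⟨⟨(i : ℕ) - (j : ℕ), hc.2⟩, Finset.mem_univ _, ?_⟩
          apply Fin.ext
          show (j : ℕ) + ((i : ℕ) - (j : ℕ)) = (i : ℕ)
          omega
        simp only [Toep, Matrix.of_apply, dif_neg hcond, star_zero, zero_mul]
    _ = Finset.univ.sum fun l : Fin L => star (Toep L K α (e l) j) * Toep L K α (e l) j :=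
        Finset.sum_map _ _ _
    _ = Finset.univ.sum fun l : Fin L => star (α l) * α l := by
        simp only [heval]

lemma Toep_trace (L K : ℕ) (hK : 0 < K) (α : EuclideanSpace ℂ (Fin L)) :
    ((Toep L K α)ᴴ * Toep L K α).trace = (((K : ℝ) * ‖α‖ ^ 2 : ℝ) : ℂ) := by
  have hnorm : ‖α‖ ^ 2 = Finset.univ.sum fun l : Fin L => ‖α l‖ ^ 2 := by
    rw [EuclideanSpace.norm_eq, Real.sq_sqrt]
    positivity
  have hdiag : ∀ j : Fin K, ((Toep L K α)ᴴ * Toep L K α).diag j = ((‖α‖ ^ 2 : ℝ) : ℂ) := by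
    intro j
    rw [Matrix.diag_apply, Matrix.mul_apply]
    simp only [conjTranspose_apply]
    rw [Toep_col_sum L K hK α j]
    have hterm : ∀ l : Fin L, star (α l) * α l = ((‖α l‖ ^ 2 : ℝ) : ℂ) := by
      intro l
      rw [Complex.star_def, mul_comm, Complex.mul_conj, Complex.normSq_eq_norm_sq]
    rw [hnorm, Complex.ofReal_sum]
    exact Finset.sum_congr rfl fun l _ => hterm l
  rw [Matrix.trace]
  simp only [hdiag, Finset.sum_const, Finset.card_univ, Fintype.card_fin, nsmul_eq_mul]
  push_cast
  ring

lemma f_le (L K : ℕ) (hK : 0 < K) (α : EuclideanSpace ℂ (Fin L)) :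
    ((Toep L K α)ᴴ * Toep L K α).det.re ≤ ‖α‖ ^ (2 * K) := by
  set hM := isHermitian_conjTranspose_mul_self (Toep L K α) with hMdef
  set ev : Fin K → ℝ := hM.eigenvalues with hevdef
  have hnn : ∀ i, 0 ≤ ev i := eigenvalues_conjTranspose_mul_self_nonneg (Toep L K α)
  have hdet : ((Toep L K α)ᴴ * Toep L K α).det.re = Finset.univ.prod fun i => ev i := by
    rw [hM.det_eq_prod_eigenvalues]
    norm_cast
  have htr : (Finset.univ.sum fun i => ev i) = (K : ℝ) * ‖α‖ ^ 2 := by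
    have h1 := sum_eigenvalues_eq_trace' hM
    rw [Toep_trace L K hK α] at h1
    exact_mod_cast h1.symm
  rw [hdet]
  have hKR : (0:ℝ) < K := by exact_mod_cast hK
  have amgm := Real.geom_mean_le_arith_mean_weighted Finset.univ
    (fun _ => (K : ℝ)⁻¹) ev (fun i _ => by positivity)
    (by simp [Finset.card_univ]; field_simp) (fun i _ => hnn i)
  have h1 : (Finset.univ.sum fun i => (K:ℝ)⁻¹ * ev i) = ‖α‖ ^ 2 := by
    rw [← Finset.mul_sum, htr]
    field_simp
  rw [h1] at amgm
  have h2 : (Finset.univ.prod fun i => ev i)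
      = (Finset.univ.prod fun i => ev i ^ ((K:ℝ)⁻¹)) ^ K := by
    rw [← Finset.prod_pow]
    apply Finset.prod_congr rfl
    intro i _
    rw [← Real.rpow_natCast (ev i ^ ((K:ℝ)⁻¹)) K, ← Real.rpow_mul (hnn i),
      inv_mul_cancel₀ (ne_of_gt hKR), Real.rpow_one]
  rw [h2]
  calc (Finset.univ.prod fun i => ev i ^ ((K:ℝ)⁻¹)) ^ K ≤ (‖α‖ ^ 2) ^ K := by
        apply pow_le_pow_left₀ _ amgm
        exact Finset.prod_nonneg fun i _ => Real.rpow_nonneg (hnn i) _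
    _ = ‖α‖ ^ (2 * K) := by rw [← pow_mul]

lemma f_smul (L K : ℕ) (c : ℂ) (α : Fin L → ℂ) :
    ((Toep L K (c • α))ᴴ * Toep L K (c • α)).det.re
      = ‖c‖ ^ (2 * K) * ((Toep L K α)ᴴ * Toep L K α).det.re := by
  rw [Toep_smul, conjTranspose_smul, Matrix.smul_mul, Matrix.mul_smul, smul_smul]
  rw [Matrix.det_smul, Fintype.card_fin]
  have hc : star c * c = ((‖c‖ ^ 2 : ℝ) : ℂ) := by
    rw [Complex.star_def, mul_comm, Complex.mul_conj, Complex.normSq_eq_norm_sq]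
  rw [hc, ← Complex.ofReal_pow, ← pow_mul, Complex.re_ofReal_mul]

end Aux

/-- There are constants `0 < C_Tmin ≤ C_Tmax ≤ 1`, depending only on `L`
and `K`, with `C_Tmin ‖α‖^(2K) ≤ det (T(α,L,K)ᴴ T(α,L,K)) ≤ C_Tmax ‖α‖^(2K)` for all
nonzero `α`. -/
theorem stmt4 (L K : ℕ) (hL : 0 < L) (hK : 0 < K) :
    ∃ CTmin CTmax : ℝ, 0 < CTmin ∧ CTmin ≤ CTmax ∧ CTmax ≤ 1 ∧
      ∀ α : EuclideanSpace ℂ (Fin L), α ≠ 0 →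
        CTmin * ‖α‖ ^ (2 * K) ≤ ((Toep L K α)ᴴ * Toep L K α).det.re ∧
        ((Toep L K α)ᴴ * Toep L K α).det.re ≤ CTmax * ‖α‖ ^ (2 * K) := by
  set f : EuclideanSpace ℂ (Fin L) → ℝ :=
    fun α => ((Toep L K α)ᴴ * Toep L K α).det.re with hfdef
  -- the unit sphere
  set S : Set (EuclideanSpace ℂ (Fin L)) := Metric.sphere 0 1 with hSdef
  have hSne : S.Nonempty := by
    refine ⟨EuclideanSpace.single ⟨0, hL⟩ (1 : ℂ), ?_⟩
    simp [hSdef, EuclideanSpace.norm_single]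
  obtain ⟨a, haS, hamin⟩ :=
    (isCompact_sphere (0 : EuclideanSpace ℂ (Fin L)) 1).exists_isMinOn hSne
      (f_continuous L K).continuousOn
  obtain ⟨b, hbS, hbmax⟩ :=
    (isCompact_sphere (0 : EuclideanSpace ℂ (Fin L)) 1).exists_isMaxOn hSne
      (f_continuous L K).continuousOn
  have hanorm : ‖a‖ = 1 := mem_sphere_zero_iff_norm.mp haS
  have hbnorm : ‖b‖ = 1 := mem_sphere_zero_iff_norm.mp hbS
  have ha0 : a ≠ 0 := by
    intro h; rw [h] at hanorm; simp at hanorm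
  refine ⟨f a, f b, ?_, ?_, ?_, ?_⟩
  · exact f_pos L K hL hK (fun h => ha0 (by ext i; exact congrFun h i))
  · exact hamin hbS
  · have := f_le L K hK b
    rwa [hbnorm, one_pow] at this
  · intro α hα
    have hr : (0:ℝ) < ‖α‖ := norm_pos_iff.mpr hα
    set u : EuclideanSpace ℂ (Fin L) := ((‖α‖ : ℂ))⁻¹ • α with hudef
    have hunorm : ‖u‖ = 1 := by
      rw [hudef, norm_smul, norm_inv, Complex.norm_real, Real.norm_eq_abs,
        abs_of_pos hr, inv_mul_cancel₀ (ne_of_gt hr)]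
    have huS : u ∈ S := mem_sphere_zero_iff_norm.mpr hunorm
    have hαu : ((‖α‖ : ℂ)) • u = α := by
      rw [hudef, smul_smul, mul_inv_cancel₀ (by exact_mod_cast ne_of_gt hr), one_smul]
    have hfα : f α = ‖α‖ ^ (2 * K) * f u := by
      conv_lhs => rw [← hαu]
      have := f_smul L K ((‖α‖ : ℂ)) u
      rw [hfdef]
      convert this using 3
      all_goals try rfl
      rw [Complex.norm_real, Real.norm_eq_abs, abs_of_pos hr]
    constructor
    · show f a * ‖α‖ ^ (2 * K) ≤ f α
      rw [hfα, mul_comm (f a)]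
      exact mul_le_mul_of_nonneg_left (hamin huS) (by positivity)
    · show f α ≤ f b * ‖α‖ ^ (2 * K)
      rw [hfα, mul_comm (f b)]
      exact mul_le_mul_of_nonneg_left (hbmax huS) (by positivity)
end

section
/- Let L and K be positive integers. There exists a real constant C > 0, depending only on L and K, such that for every nonzero α ∈ ℂ^L and every index k ∈ {1, …, K}, the kth diagonal entry of (T(α,L,K)ᴴ T(α,L,K))^{-1} is a positive real number satisfying ([(T(α,L,K)ᴴ T(α,L,K))^{-1}]_{kk})^{-1} ≥ C·‖α‖². -/
open Matrix

lemma toep_mulVec_eq_zero {L K : ℕ} {α : Fin L → ℂ} (hα : α ≠ 0)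
    {x : Fin K → ℂ} (hx : (Toep L K α).mulVec x = 0) : x = 0 := by
  have hex : ∃ n, ∃ h : n < L, α ⟨n, h⟩ ≠ 0 := by
    obtain ⟨i, hi⟩ := Function.ne_iff.mp hα
    exact ⟨i, i.2, by simpa using hi⟩
  classical
  set m := Nat.find hex with hmdef
  obtain ⟨hm, hαm⟩ := Nat.find_spec hex
  have hmin : ∀ n, n < m → ∀ h : n < L, α ⟨n, h⟩ = 0 := by
    intro n hn h
    have := Nat.find_min hex hn
    push_neg at this
    exact this h
  have key : ∀ j : ℕ, ∀ hj : j < K, x ⟨j, hj⟩ = 0 := by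
    intro j
    induction j using Nat.strong_induction_on with
    | _ j IH =>
      intro hj
      have hr : m + j < K + L - 1 := by omega
      have hrow := congrFun hx ⟨m + j, hr⟩
      simp only [Matrix.mulVec, dotProduct, Toep, Matrix.of_apply, Pi.zero_apply] at hrow
      rw [Finset.sum_eq_single (⟨j, hj⟩ : Fin K)] at hrow
      · have hcond : (j : ℕ) ≤ m + j ∧ m + j - j < L := ⟨by omega, by omega⟩
        rw [dif_pos hcond] at hrow
        have : α ⟨m + j - j, hcond.2⟩ = α ⟨m, hm⟩ := congrArg α (Fin.mk_eq_mk.mpr (by omega))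
        rw [this] at hrow
        exact (mul_eq_zero.mp hrow).resolve_left hαm
      · intro b _ hb
        rcases lt_or_gt_of_ne (fun h : (b : ℕ) = j => hb (Fin.ext h)) with hlt | hgt
        · rw [IH b hlt b.2, mul_zero]
        · by_cases hc : (b : ℕ) ≤ m + j ∧ m + j - (b : ℕ) < L
          · rw [dif_pos hc, hmin _ (by omega) hc.2, zero_mul]
          · rw [dif_neg hc, zero_mul]
      · intro h; exact absurd (Finset.mem_univ _) h
  funext i
  have := key i.1 i.2
  simpa using this

open ComplexOrder in
lemma toep_gram_posDef {L K : ℕ} {α : Fin L → ℂ} (hα : α ≠ 0) :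
    ((Toep L K α)ᴴ * Toep L K α).PosDef := by
  refine PosDef.of_dotProduct_mulVec_pos (isHermitian_conjTranspose_mul_self _) fun x hx => ?_
  refine lt_of_le_of_ne ((posSemidef_conjTranspose_mul_self (Toep L K α)).dotProduct_mulVec_nonneg x) fun hc => hx ?_
  rw [← mulVec_mulVec, dotProduct_mulVec, vecMul_conjTranspose, star_star] at hc
  exact toep_mulVec_eq_zero hα (dotProduct_star_self_eq_zero.mp hc.symm)

open ComplexOrder in
lemma gram_det_ne {L K : ℕ} {α : Fin L → ℂ} (hα : α ≠ 0) :
    ((Toep L K α)ᴴ * Toep L K α).det ≠ 0 :=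
  (toep_gram_posDef hα).det_pos.ne'

open ComplexOrder in
lemma gram_inv_diag {L K : ℕ} {α : Fin L → ℂ} (hα : α ≠ 0) (k : Fin K) :
    0 < (((Toep L K α)ᴴ * Toep L K α)⁻¹ k k).re ∧
    (((Toep L K α)ᴴ * Toep L K α)⁻¹ k k).im = 0 := by
  have h := (toep_gram_posDef (K := K) hα).inv
  have h2 : (0 : ℂ) < ((Toep L K α)ᴴ * Toep L K α)⁻¹ k k := by
    have := h.dotProduct_mulVec_pos (x := Pi.single k 1) (by
      intro hh
      have := congrFun hh k
      simp at this)
    simpa [mulVec_single, dotProduct, Pi.single_apply, apply_ite, Finset.sum_ite_eq] using this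
  rw [Complex.lt_def] at h2
  exact ⟨by simpa using h2.1, by simpa using h2.2.symm⟩

lemma toep_smul (L K : ℕ) (c : ℂ) (α : EuclideanSpace ℂ (Fin L)) :
    Toep L K (c • α) = c • Toep L K α := by
  ext i j
  simp only [Toep, Matrix.of_apply, Matrix.smul_apply, smul_eq_mul]
  split <;> simp [PiLp.smul_apply]

lemma gram_smul (L K : ℕ) (c : ℂ) (α : EuclideanSpace ℂ (Fin L)) :
    (Toep L K (c • α))ᴴ * Toep L K (c • α)
      = (star c * c) • ((Toep L K α)ᴴ * Toep L K α) := by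
  rw [toep_smul, conjTranspose_smul, Matrix.smul_mul, Matrix.mul_smul, smul_smul]

lemma inv_smul' {K : ℕ} (c : ℂ) (hc : c ≠ 0) (M : Matrix (Fin K) (Fin K) ℂ)
    (hM : IsUnit M.det) : (c • M)⁻¹ = c⁻¹ • M⁻¹ := by
  apply inv_eq_right_inv
  rw [Matrix.smul_mul, Matrix.mul_smul, smul_smul, mul_inv_cancel₀ hc, one_smul,
    mul_nonsing_inv _ hM]

lemma toep_entry_continuous (L K : ℕ) (i : Fin (K + L - 1)) (j : Fin K) :
    Continuous fun α : EuclideanSpace ℂ (Fin L) => Toep L K α i j := by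
  simp only [Toep, Matrix.of_apply]
  split
  · exact (EuclideanSpace.proj _).continuous
  · exact continuous_const

lemma gram_continuous (L K : ℕ) :
    Continuous fun α : EuclideanSpace ℂ (Fin L) => (Toep L K α)ᴴ * Toep L K α := by
  apply continuous_matrix
  intro i j
  simp only [mul_apply, conjTranspose_apply]
  exact continuous_finset_sum _ fun l _ =>
    ((toep_entry_continuous L K l i).star).mul (toep_entry_continuous L K l j)

lemma inv_entry_eq {K : ℕ} (M : Matrix (Fin K) (Fin K) ℂ) (k : Fin K) :
    M⁻¹ k k = (M.det)⁻¹ * M.adjugate k k := by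
  rw [Matrix.inv_def, Matrix.smul_apply, smul_eq_mul, Ring.inverse_eq_inv']

lemma inv_entry_contOn (L K : ℕ) (k : Fin K) :
    ContinuousOn (fun α : EuclideanSpace ℂ (Fin L) =>
      ((((Toep L K α)ᴴ * Toep L K α)⁻¹) k k).re) {α | α ≠ 0} := by
  have hg := gram_continuous L K
  have hdet : ContinuousOn (fun α : EuclideanSpace ℂ (Fin L) =>
      (((Toep L K α)ᴴ * Toep L K α).det)⁻¹) {α | α ≠ 0} :=
    ContinuousOn.inv₀ hg.matrix_det.continuousOn fun α hα => gram_det_ne (fun h => hα (by simpa using congrArg (WithLp.toLp 2) h))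
  have hadj : Continuous (fun α : EuclideanSpace ℂ (Fin L) =>
      ((Toep L K α)ᴴ * Toep L K α).adjugate k k) :=
    hg.matrix_adjugate.matrix_elem k k
  have hmain : ContinuousOn (fun α : EuclideanSpace ℂ (Fin L) =>
      (((Toep L K α)ᴴ * Toep L K α)⁻¹) k k) {α | α ≠ 0} := by
    simp only [inv_entry_eq]
    exact hdet.mul hadj.continuousOn
  exact Complex.continuous_re.comp_continuousOn hmain


/-- There is a constant `C > 0`, depending only on `L` and `K`, such that
for every nonzero `α` and every `k`, the `k`-th diagonal entry of
`(T(α,L,K)ᴴ T(α,L,K))⁻¹` is a positive real whose inverse is at least `C ‖α‖²`. -/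
theorem stmt8 (L K : ℕ) (hL : 0 < L) (hK : 0 < K) :
    ∃ C : ℝ, 0 < C ∧
      ∀ α : EuclideanSpace ℂ (Fin L), α ≠ 0 → ∀ k : Fin K,
        0 < (((Toep L K α)ᴴ * Toep L K α)⁻¹ k k).re ∧
        (((Toep L K α)ᴴ * Toep L K α)⁻¹ k k).im = 0 ∧
        C * ‖α‖ ^ 2 ≤ ((((Toep L K α)ᴴ * Toep L K α)⁻¹ k k).re)⁻¹ := by
  classical
  haveI : Nonempty (Fin K) := ⟨⟨0, hK⟩⟩
  set S := Metric.sphere (0 : EuclideanSpace ℂ (Fin L)) 1 with hS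
  have hScompact : IsCompact S := isCompact_sphere _ _
  have hSne : S.Nonempty := by
    refine ⟨EuclideanSpace.single ⟨0, hL⟩ 1, ?_⟩
    rw [hS, mem_sphere_zero_iff_norm, EuclideanSpace.norm_single]
    simp
  have hsub : S ⊆ {α : EuclideanSpace ℂ (Fin L) | α ≠ 0} := by
    intro α hα h0
    rw [hS, mem_sphere_zero_iff_norm] at hα
    rw [h0] at hα
    simp at hα
  choose β hβS hβmax using fun k : Fin K =>
    hScompact.exists_isMaxOn hSne ((inv_entry_contOn L K k).mono hsub)
  set Mx : ℝ := Finset.univ.sup' Finset.univ_nonempty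
    (fun k : Fin K => ((((Toep L K (β k))ᴴ * Toep L K (β k))⁻¹) k k).re) with hMx
  have hMpos : 0 < Mx := by
    obtain ⟨k0⟩ := (inferInstance : Nonempty (Fin K))
    exact lt_of_lt_of_le (gram_inv_diag (fun h => hsub (hβS k0) (by simpa using congrArg (WithLp.toLp 2) h)) k0).1
      (Finset.le_sup' (fun k : Fin K => ((((Toep L K (β k))ᴴ * Toep L K (β k))⁻¹) k k).re) (Finset.mem_univ k0))
  refine ⟨Mx⁻¹, inv_pos.mpr hMpos, ?_⟩
  intro α hα k
  refine ⟨(gram_inv_diag (fun h => hα (by simpa using congrArg (WithLp.toLp 2) h)) k).1, (gram_inv_diag (fun h => hα (by simpa using congrArg (WithLp.toLp 2) h)) k).2, ?_⟩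
  set r : ℝ := ‖α‖ with hrdef
  have hr : 0 < r := norm_pos_iff.mpr hα
  have hc0 : ((r : ℂ)) ≠ 0 := by exact_mod_cast hr.ne'
  set αh : EuclideanSpace ℂ (Fin L) := ((r : ℂ))⁻¹ • α with hαh
  have hαh_norm : ‖αh‖ = 1 := by
    rw [hαh, norm_smul, norm_inv, Complex.norm_real, Real.norm_eq_abs, abs_of_pos hr, ← hrdef,
      inv_mul_cancel₀ hr.ne']
  have hαhS : αh ∈ S := by rw [hS, mem_sphere_zero_iff_norm]; exact hαh_norm
  have hαh_ne : αh ≠ 0 := hsub hαhS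
  have hrec : α = (r : ℂ) • αh := by
    rw [hαh, smul_smul, mul_inv_cancel₀ hc0, one_smul]
  have hsc : star ((r : ℂ)) * (r : ℂ) = (((r ^ 2 : ℝ)) : ℂ) := by
    simp [Complex.conj_ofReal, sq]
  have hchain : (Toep L K α)ᴴ * Toep L K α
      = (((r ^ 2 : ℝ)) : ℂ) • ((Toep L K αh)ᴴ * Toep L K αh) := by
    conv_lhs => rw [hrec]
    rw [WithLp.ofLp_smul, gram_smul, hsc]
  have hne2 : ((((r ^ 2 : ℝ)) : ℂ)) ≠ 0 := by
    exact_mod_cast (pow_pos hr 2).ne'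
  have hinv : ((Toep L K α)ᴴ * Toep L K α)⁻¹
      = ((((r ^ 2 : ℝ)) : ℂ))⁻¹ • ((Toep L K αh)ᴴ * Toep L K αh)⁻¹ := by
    rw [hchain, inv_smul' _ hne2 _ ((gram_det_ne (fun h => hαh_ne (by simpa using congrArg (WithLp.toLp 2) h))).isUnit)]
  have hre : (((Toep L K α)ᴴ * Toep L K α)⁻¹ k k).re
      = (r ^ 2)⁻¹ * (((Toep L K αh)ᴴ * Toep L K αh)⁻¹ k k).re := by
    rw [hinv, Matrix.smul_apply, smul_eq_mul, ← Complex.ofReal_inv, Complex.re_ofReal_mul]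
  have hfh_pos : 0 < (((Toep L K αh)ᴴ * Toep L K αh)⁻¹ k k).re :=
    (gram_inv_diag (fun h => hαh_ne (by simpa using congrArg (WithLp.toLp 2) h)) k).1
  have hfh_le : (((Toep L K αh)ᴴ * Toep L K αh)⁻¹ k k).re ≤ Mx :=
    le_trans ((isMaxOn_iff.mp (hβmax k)) αh hαhS) (Finset.le_sup' (fun k : Fin K => ((((Toep L K (β k))ᴴ * Toep L K (β k))⁻¹) k k).re) (Finset.mem_univ k))
  rw [hre]
  rw [mul_inv, inv_inv]
  have h1 : Mx⁻¹ ≤ ((((Toep L K αh)ᴴ * Toep L K αh)⁻¹ k k).re)⁻¹ :=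
    inv_anti₀ hfh_pos hfh_le
  calc Mx⁻¹ * r ^ 2 = r ^ 2 * Mx⁻¹ := mul_comm _ _
    _ ≤ r ^ 2 * ((((Toep L K αh)ᴴ * Toep L K αh)⁻¹ k k).re)⁻¹ :=
        mul_le_mul_of_nonneg_left h1 (sq_nonneg r)
end

section
/- Let L and M be positive integers, let d > 0, and let e ∈ ℂ^L be a nonzero vector each of whose nonzero entries has modulus at least d. For any m with 1 ≤ m ≤ M and any indices 1 ≤ i_1 < i_2 < … < i_m ≤ M, let T_sub denote the submatrix of the Toeplitz matrix T(e, L, M) consisting of columns i_1, …, i_m. Then det(T_subᴴ T_sub) ≥ d^(2m), with equality if and only if ‖e‖ = d. -/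
open Matrix

open Finset

variable {N m : ℕ}

private lemma conj_det_submatrix (A : Matrix (Fin N) (Fin m) ℂ) (f : Fin m → Fin N) :
    (starRingEnd ℂ) ((A.submatrix f id).det)
      = ∑ σ : Equiv.Perm (Fin m), (↑↑(Equiv.Perm.sign σ) : ℂ) * ∏ i, (starRingEnd ℂ) (A (f i) (σ i)) := by
  rw [← Matrix.det_transpose, det_apply', map_sum]
  refine Finset.sum_congr rfl fun σ _ => ?_
  rw [_root_.map_mul, map_prod, map_intCast]
  rfl

private lemma cb_expand (A : Matrix (Fin N) (Fin m) ℂ) :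
    (Aᴴ * A).det = ∑ f : Fin m → Fin N,
      (starRingEnd ℂ) ((A.submatrix f id).det) * ∏ i, A (f i) i := by
  calc (Aᴴ * A).det
      = ∑ σ : Equiv.Perm (Fin m), (↑↑(Equiv.Perm.sign σ) : ℂ) *
          ∏ i, ∑ k, (starRingEnd ℂ) (A k (σ i)) * A k i := by
        rw [det_apply']
        refine Finset.sum_congr rfl fun σ _ => ?_
        simp [Matrix.mul_apply, Matrix.conjTranspose_apply]
    _ = ∑ σ : Equiv.Perm (Fin m), ∑ f : Fin m → Fin N,
          (↑↑(Equiv.Perm.sign σ) : ℂ) * ∏ i, (starRingEnd ℂ) (A (f i) (σ i)) * A (f i) i := by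
        simp only [Finset.prod_univ_sum, Fintype.piFinset_univ, Finset.mul_sum]
    _ = ∑ f : Fin m → Fin N, ∑ σ : Equiv.Perm (Fin m),
          (↑↑(Equiv.Perm.sign σ) : ℂ) * ∏ i, (starRingEnd ℂ) (A (f i) (σ i)) * A (f i) i :=
        Finset.sum_comm
    _ = _ := by
        refine Finset.sum_congr rfl fun f _ => ?_
        rw [conj_det_submatrix, Finset.sum_mul]
        refine Finset.sum_congr rfl fun σ _ => ?_
        rw [Finset.prod_mul_distrib, mul_assoc]

private lemma cb_perm_sum (A : Matrix (Fin N) (Fin m) ℂ) (g : Fin m → Fin N) :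
    (∑ τ : Equiv.Perm (Fin m),
      (starRingEnd ℂ) ((A.submatrix (g ∘ ⇑τ) id).det) * ∏ i, A (g (τ i)) i)
      = (Complex.normSq ((A.submatrix g id).det) : ℂ) := by
  have h1 : ∀ τ : Equiv.Perm (Fin m),
      (A.submatrix (g ∘ ⇑τ) id).det = (↑↑(Equiv.Perm.sign τ) : ℂ) * (A.submatrix g id).det := by
    intro τ
    have : A.submatrix (g ∘ ⇑τ) id = (A.submatrix g id).submatrix (⇑τ) id := by
      simp [Matrix.submatrix_submatrix]
    rw [this, Matrix.det_permute]
  calc (∑ τ : Equiv.Perm (Fin m),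
      (starRingEnd ℂ) ((A.submatrix (g ∘ ⇑τ) id).det) * ∏ i, A (g (τ i)) i)
      = (starRingEnd ℂ) ((A.submatrix g id).det) *
          ∑ τ : Equiv.Perm (Fin m), (↑↑(Equiv.Perm.sign τ) : ℂ) * ∏ i, (A.submatrix g id) (τ i) i := by
        rw [Finset.mul_sum]
        refine Finset.sum_congr rfl fun τ _ => ?_
        rw [h1, _root_.map_mul, map_intCast]
        simp [Matrix.submatrix_apply]
        ring
    _ = (starRingEnd ℂ) ((A.submatrix g id).det) * (A.submatrix g id).det := by
        rw [← det_apply']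
    _ = _ := by rw [← Complex.normSq_eq_conj_mul_self]

/-- Cauchy–Binet for Gram determinants. -/
lemma cb (A : Matrix (Fin N) (Fin m) ℂ) :
    (Aᴴ * A).det = ((∑ g ∈ univ.filter (fun g : Fin m → Fin N => StrictMono g),
      Complex.normSq ((A.submatrix g id).det) : ℝ) : ℂ) := by
  rw [cb_expand]
  rw [← Finset.sum_filter_add_sum_filter_not univ (fun f : Fin m → Fin N => Function.Injective f)]
  have h2 : ∑ f ∈ univ.filter (fun f : Fin m → Fin N => ¬ Function.Injective f),
      (starRingEnd ℂ) ((A.submatrix f id).det) * ∏ i, A (f i) i = 0 := by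
    refine Finset.sum_eq_zero fun f hf => ?_
    have hf' := (Finset.mem_filter.mp hf).2
    simp only [Function.Injective] at hf'
    push_neg at hf'
    obtain ⟨i, j, hij, hne⟩ := hf'
    have : (A.submatrix f id).det = 0 :=
      Matrix.det_zero_of_row_eq hne (by funext k; simp [Matrix.submatrix_apply, hij])
    rw [this, map_zero, zero_mul]
  rw [h2, add_zero]
  have h3 : ∑ f ∈ univ.filter (fun f : Fin m → Fin N => Function.Injective f),
      (starRingEnd ℂ) ((A.submatrix f id).det) * ∏ i, A (f i) i
      = ∑ p ∈ (univ.filter (fun g : Fin m → Fin N => StrictMono g)) ×ˢ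
          (univ : Finset (Equiv.Perm (Fin m))),
          (starRingEnd ℂ) ((A.submatrix (p.1 ∘ ⇑p.2) id).det) * ∏ i, A (p.1 (p.2 i)) i := by
    refine (Finset.sum_bij (fun (p : (Fin m → Fin N) × Equiv.Perm (Fin m)) _ => p.1 ∘ ⇑p.2) ?_ ?_ ?_ ?_).symm
    · rintro ⟨g, τ⟩ hp
      simp only [Finset.mem_product, Finset.mem_filter, Finset.mem_univ, true_and] at hp ⊢
      exact hp.1.injective.comp τ.injective
    · rintro ⟨g₁, τ₁⟩ hp₁ ⟨g₂, τ₂⟩ hp₂ heq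
      simp only [Finset.mem_product, Finset.mem_filter, Finset.mem_univ, true_and, and_true] at hp₁ hp₂
      replace heq : g₁ ∘ ⇑τ₁ = g₂ ∘ ⇑τ₂ := heq
      have hcomp : ∀ (g : Fin m → Fin N) (τ : Equiv.Perm (Fin m)),
          Finset.image (g ∘ ⇑τ) univ = Finset.image g univ := fun g τ => by
        rw [← Finset.image_image, Finset.image_univ_equiv]
      have himg : Finset.image g₁ univ = Finset.image g₂ univ := by
        rw [← hcomp g₁ τ₁, ← hcomp g₂ τ₂, heq]
      have hc : (Finset.image g₁ univ).card = m := by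
        rw [Finset.card_image_of_injective _ hp₁.injective, card_univ, Fintype.card_fin]
      have hg1 : g₁ = ⇑((Finset.image g₁ univ).orderEmbOfFin hc) :=
        Finset.orderEmbOfFin_unique hc (fun x => Finset.mem_image_of_mem g₁ (mem_univ x)) hp₁
      have hg2 : g₂ = ⇑((Finset.image g₁ univ).orderEmbOfFin hc) :=
        Finset.orderEmbOfFin_unique hc
          (fun x => himg ▸ Finset.mem_image_of_mem g₂ (mem_univ x)) hp₂
      have hgg : g₁ = g₂ := hg1.trans hg2.symm
      subst hgg
      have hτ : ⇑τ₁ = ⇑τ₂ := by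
        funext i
        exact hp₁.injective (congrFun heq i)
      exact Prod.ext rfl (Equiv.coe_fn_injective hτ)
    · intro f hf
      simp only [Finset.mem_filter, Finset.mem_univ, true_and] at hf
      have hc : (Finset.image f univ).card = m := by
        rw [Finset.card_image_of_injective _ hf, card_univ, Fintype.card_fin]
      set s := Finset.image f univ with hs
      set g : Fin m → Fin N := ⇑(s.orderEmbOfFin hc) with hgdef
      have hmemf : ∀ i, f i ∈ s := fun i => Finset.mem_image_of_mem f (mem_univ i)
      set t : Fin m → Fin m := fun i => (s.orderIsoOfFin hc).symm ⟨f i, hmemf i⟩ with htdef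
      have htinj : Function.Injective t := by
        intro i j hij
        have h2 := congrArg (fun x => ((s.orderIsoOfFin hc) x : Fin N)) hij
        simp only [htdef, OrderIso.apply_symm_apply] at h2
        exact hf h2
      refine ⟨(g, Equiv.ofBijective t (Finite.injective_iff_bijective.mp htinj)), ?_, ?_⟩
      · simp only [Finset.mem_product, Finset.mem_filter, Finset.mem_univ, true_and, and_true]
        exact (s.orderEmbOfFin hc).strictMono
      · funext i
        show g (t i) = f i
        rw [hgdef]
        rw [← Finset.coe_orderIsoOfFin_apply]
        show ((s.orderIsoOfFin hc) ((s.orderIsoOfFin hc).symm ⟨f i, hmemf i⟩) : Fin N) = f i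
        simp
    · rintro ⟨g, τ⟩ hp; rfl
  rw [h3, Finset.sum_product]
  push_cast
  refine Finset.sum_congr rfl fun g hg => ?_
  exact cb_perm_sum A g


private def rix {L M : ℕ} (j : Fin M) (ℓ : Fin L) : Fin (M + L - 1) :=
  ⟨(j : ℕ) + ℓ, by have h1 := j.isLt; have h2 := ℓ.isLt; omega⟩


/-- Let `e ∈ ℂ^L` be nonzero with every nonzero entry of modulus at least
`d > 0`. For any strictly increasing choice of `m` columns (`1 ≤ m ≤ M`) of `T(e,L,M)`,
the Gram determinant of the resulting submatrix `T_sub` satisfies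
`det (T_subᴴ T_sub) ≥ d^(2m)`, with equality iff `‖e‖ = d`. -/
theorem stmt9 (L M : ℕ) (hL : 0 < L) (hM : 0 < M) (d : ℝ) (hd : 0 < d)
    (e : EuclideanSpace ℂ (Fin L)) (he : e ≠ 0)
    (hmod : ∀ ℓ : Fin L, e ℓ ≠ 0 → d ≤ ‖e ℓ‖)
    (m : ℕ) (hm1 : 1 ≤ m) (hmM : m ≤ M)
    (idx : Fin m → Fin M) (hidx : StrictMono idx) :
    d ^ (2 * m) ≤
      (((Toep L M e).submatrix id idx)ᴴ * (Toep L M e).submatrix id idx).det.re ∧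
    ((((Toep L M e).submatrix id idx)ᴴ * (Toep L M e).submatrix id idx).det.re
        = d ^ (2 * m) ↔ ‖e‖ = d) := by
  classical
  haveI : NeZero m := ⟨by omega⟩
  set A := (Toep L M e).submatrix id idx with hA
  obtain ⟨ℓ₀, hℓ₀⟩ : ∃ ℓ, e ℓ ≠ 0 := by
    by_contra h; push_neg at h; exact he (by ext ℓ; simp [h ℓ])
  set S := univ.filter (fun ℓ : Fin L => e ℓ ≠ 0) with hS
  have hSne : S.Nonempty := ⟨ℓ₀, by simp [hS, hℓ₀]⟩
  set ℓ1 := S.max' hSne with hℓ1def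
  have hℓ1 : e ℓ1 ≠ 0 := by
    have := S.max'_mem hSne
    simp only [hS, Finset.mem_filter] at this
    exact this.2
  have hmax : ∀ ℓ : Fin L, ℓ1 < ℓ → e ℓ = 0 := by
    intro ℓ hlt; by_contra hne
    exact absurd (S.le_max' ℓ (by simp [hS, hne])) (not_le.mpr hlt)
  have hnormsq : ‖e‖^2 = ∑ ℓ : Fin L, Complex.normSq (e ℓ) := by
    rw [EuclideanSpace.norm_eq, Real.sq_sqrt (Finset.sum_nonneg fun i _ => sq_nonneg _)]
    refine Finset.sum_congr rfl fun ℓ _ => ?_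
    rw [Complex.sq_norm]
  have hd2 : ∀ ℓ : Fin L, e ℓ ≠ 0 → d^2 ≤ Complex.normSq (e ℓ) := by
    intro ℓ h
    have h2 := hmod ℓ h
    rw [Complex.normSq_eq_norm_sq]; nlinarith [hd.le]
  have hdnorm : d ≤ ‖e‖ := by
    have h1 : d^2 ≤ ‖e‖^2 := by
      rw [hnormsq]
      calc d^2 ≤ Complex.normSq (e ℓ1) := hd2 _ hℓ1
        _ ≤ ∑ ℓ, Complex.normSq (e ℓ) :=
          Finset.single_le_sum (fun i _ => Complex.normSq_nonneg _) (mem_univ _)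
    nlinarith [norm_nonneg e]
  -- chosen strict mono row selections
  set g : Fin L → (Fin m → Fin (M + L - 1)) :=
    fun ℓ j => rix (idx j) (if j = 0 then ℓ else ℓ1) with hgdef
  have hival : ∀ ℓ (j : Fin m), ((g ℓ j : Fin (M + L - 1)) : ℕ)
      = (idx j : ℕ) + (if j = 0 then (ℓ : ℕ) else (ℓ1 : ℕ)) := by
    intro ℓ j
    by_cases h : j = 0 <;> simp [hgdef, rix, h]
  have hg_strict : ∀ ℓ : Fin L, ℓ ≤ ℓ1 → StrictMono (g ℓ) := by
    intro ℓ hℓ j k hjk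
    have hk0 : k ≠ 0 := by
      rintro rfl
      rw [Fin.lt_def] at hjk
      simp at hjk
    have hik : (idx j : ℕ) < idx k := hidx hjk
    rw [Fin.lt_def, hival, hival]
    have hle : (ℓ : ℕ) ≤ ℓ1 := hℓ
    by_cases hj : j = 0
    · subst hj; rw [if_pos rfl, if_neg hk0]; omega
    · rw [if_neg hj, if_neg hk0]; omega
  -- determinant of the chosen row selections
  have hg_det : ∀ ℓ : Fin L, (ℓ:ℕ) ≤ (ℓ1:ℕ) →
      ((Toep L M e).submatrix (g ℓ) idx).det = e ℓ * e ℓ1 ^ (m-1) := by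
    intro ℓ hℓ
    have htri : ((Toep L M e).submatrix (g ℓ) idx).BlockTriangular id := by
      intro j k hk
      have hk' : k < j := hk
      have hj0 : j ≠ 0 := by
        rintro rfl; rw [Fin.lt_def] at hk'; simp at hk'
      have hik : (idx k : ℕ) < idx j := hidx hk'
      have hrow : ((g ℓ j : Fin (M+L-1)) : ℕ) = (idx j : ℕ) + (ℓ1:ℕ) := by
        rw [hival, if_neg hj0]
      show (Toep L M e) (g ℓ j) (idx k) = 0
      rw [Toep]
      simp only [Matrix.of_apply]
      split_ifs with hcond
      · apply hmax
        rw [Fin.lt_def]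
        simp only [Fin.val_mk]
        omega
      · rfl
    rw [Matrix.det_of_upperTriangular htri]
    have hdiag : ∀ j : Fin m,
        ((Toep L M e).submatrix (g ℓ) idx) j j = if j = 0 then e ℓ else e ℓ1 := by
      intro j
      have hℓlt := ℓ.isLt
      have hℓ1lt := ℓ1.isLt
      by_cases h : j = 0
      · subst h
        rw [if_pos rfl]
        have hrow : ((g ℓ 0 : Fin (M+L-1)) : ℕ) = (idx 0 : ℕ) + (ℓ:ℕ) := by
          rw [hival, if_pos rfl]
        show (Toep L M e) (g ℓ 0) (idx 0) = e ℓ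
        rw [Toep]
        simp only [Matrix.of_apply]
        split_ifs with hc
        · refine congrArg e (Fin.ext ?_)
          simp only [Fin.val_mk]
          omega
        · exact absurd ⟨by omega, by omega⟩ hc
      · rw [if_neg h]
        have hrow : ((g ℓ j : Fin (M+L-1)) : ℕ) = (idx j : ℕ) + (ℓ1:ℕ) := by
          rw [hival, if_neg h]
        show (Toep L M e) (g ℓ j) (idx j) = e ℓ1
        rw [Toep]
        simp only [Matrix.of_apply]
        split_ifs with hc
        · refine congrArg e (Fin.ext ?_)
          simp only [Fin.val_mk]
          omega
        · exact absurd ⟨by omega, by omega⟩ hc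
    calc ∏ j : Fin m, ((Toep L M e).submatrix (g ℓ) idx) j j
        = ∏ j : Fin m, (if j = 0 then e ℓ else e ℓ1) :=
          Finset.prod_congr rfl (fun j _ => hdiag j)
      _ = e ℓ * e ℓ1 ^ (m-1) := by
          rw [← Finset.mul_prod_erase univ _ (Finset.mem_univ (0 : Fin m)), if_pos rfl]
          congr 1
          rw [Finset.prod_congr rfl (fun j hj => if_neg (Finset.mem_erase.mp hj).1),
            Finset.prod_const, Finset.card_erase_of_mem (mem_univ _), Finset.card_univ,
            Fintype.card_fin]
  have hsub2 : ∀ ℓ : Fin L, A.submatrix (g ℓ) id = (Toep L M e).submatrix (g ℓ) idx := by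
    intro ℓ
    rw [hA, Matrix.submatrix_submatrix]
    rfl
  -- key inequality
  have hre : (Aᴴ * A).det.re = ∑ gg ∈ univ.filter
      (fun gg : Fin m → Fin (M+L-1) => StrictMono gg),
      Complex.normSq ((A.submatrix gg id).det) := by
    rw [cb]; exact Complex.ofReal_re _
  have hkey : ‖e‖^2 * (d^2)^(m-1) ≤ (Aᴴ * A).det.re := by
    rw [hre]
    have hginj : ∀ ℓ ∈ univ.filter (fun ℓ : Fin L => ℓ ≤ ℓ1),
        ∀ ℓ' ∈ univ.filter (fun ℓ : Fin L => ℓ ≤ ℓ1), g ℓ = g ℓ' → ℓ = ℓ' := by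
      intro ℓ _ ℓ' _ hgg
      have h0 := congrFun hgg 0
      have h1 := congrArg (fun x : Fin (M + L - 1) => (x : ℕ)) h0
      rw [hival ℓ 0, hival ℓ' 0] at h1
      simp at h1
      exact Fin.ext h1
    have hsubset : (univ.filter (fun ℓ : Fin L => ℓ ≤ ℓ1)).image g ⊆
        univ.filter (fun gg : Fin m → Fin (M+L-1) => StrictMono gg) := by
      intro gg hgg
      simp only [Finset.mem_image, Finset.mem_filter, Finset.mem_univ, true_and] at hgg ⊢
      obtain ⟨ℓ, hℓ, rfl⟩ := hgg
      exact hg_strict ℓ hℓ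
    calc ‖e‖^2 * (d^2)^(m-1)
        ≤ ‖e‖^2 * (Complex.normSq (e ℓ1))^(m-1) := by
          refine mul_le_mul_of_nonneg_left (pow_le_pow_left₀ (by positivity) (hd2 _ hℓ1) _) ?_
          positivity
      _ = ∑ ℓ ∈ univ.filter (fun ℓ : Fin L => ℓ ≤ ℓ1),
            Complex.normSq (e ℓ) * (Complex.normSq (e ℓ1))^(m-1) := by
          rw [← Finset.sum_mul]
          congr 1
          rw [hnormsq]
          refine (Finset.sum_subset (Finset.filter_subset _ _) fun ℓ _ hℓ => ?_).symm
          have : ℓ1 < ℓ := by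
            simp only [Finset.mem_filter, Finset.mem_univ, true_and, not_le] at hℓ
            exact hℓ
          rw [hmax ℓ this, map_zero]
      _ = ∑ gg ∈ (univ.filter (fun ℓ : Fin L => ℓ ≤ ℓ1)).image g,
            Complex.normSq ((A.submatrix gg id).det) := by
          rw [Finset.sum_image hginj]
          refine Finset.sum_congr rfl fun ℓ hℓ => ?_
          have hℓ' : (ℓ:ℕ) ≤ (ℓ1:ℕ) := by
            simp only [Finset.mem_filter, Finset.mem_univ, true_and] at hℓ
            exact hℓ
          rw [hsub2, hg_det ℓ hℓ', _root_.map_mul, map_pow]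
      _ ≤ _ := Finset.sum_le_sum_of_subset_of_nonneg hsubset
            (fun _ _ _ => Complex.normSq_nonneg _)
  have hpowsplit : d^(2*m) = d^2 * (d^2)^(m-1) := by
    calc d^(2*m) = (d^2)^m := by rw [pow_mul]
      _ = (d^2)^1 * (d^2)^(m-1) := by rw [← pow_add]; congr 1; omega
      _ = d^2 * (d^2)^(m-1) := by rw [pow_one]
  refine ⟨?_, ?_, ?_⟩
  · have h22 : d^2 ≤ ‖e‖^2 := by nlinarith
    have hP : (0:ℝ) ≤ (d^2)^(m-1) := by positivity
    have := mul_le_mul_of_nonneg_right h22 hP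
    rw [hpowsplit]
    linarith
  · intro h
    have hP : (0:ℝ) < (d^2)^(m-1) := by positivity
    have h1 : ‖e‖^2 * (d^2)^(m-1) ≤ d^2 * (d^2)^(m-1) := by
      rw [← hpowsplit, ← h]; exact hkey
    have h2 : ‖e‖^2 ≤ d^2 := le_of_mul_le_mul_right h1 hP
    have h3 : ‖e‖ ≤ d := by nlinarith [norm_nonneg e]
    linarith [hdnorm]
  · intro h
    -- unique support
    have huniq : ∀ ℓ : Fin L, ℓ ≠ ℓ1 → e ℓ = 0 := by
      intro ℓ hne
      by_contra h0
      have hpair : d^2 + d^2 ≤ ∑ ℓ' : Fin L, Complex.normSq (e ℓ') := by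
        calc d^2 + d^2 ≤ Complex.normSq (e ℓ) + Complex.normSq (e ℓ1) :=
              add_le_add (hd2 _ h0) (hd2 _ hℓ1)
          _ = ∑ ℓ' ∈ ({ℓ, ℓ1} : Finset (Fin L)), Complex.normSq (e ℓ') :=
              (Finset.sum_pair (f := fun ℓ' => Complex.normSq (e ℓ')) hne).symm
          _ ≤ _ := Finset.sum_le_sum_of_subset_of_nonneg (Finset.subset_univ _)
              (fun _ _ _ => Complex.normSq_nonneg _)
      rw [← hnormsq, h] at hpair
      nlinarith
    have habs : Complex.normSq (e ℓ1) = d^2 := by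
      have h1 : ∑ ℓ' : Fin L, Complex.normSq (e ℓ') = Complex.normSq (e ℓ1) :=
        Finset.sum_eq_single ℓ1 (fun b _ hb => by rw [huniq b hb, map_zero])
          (fun hb => absurd (mem_univ _) hb)
      rw [← h1, ← hnormsq, h]
    have hgram : Aᴴ * A = ((d:ℂ)^2) • (1 : Matrix (Fin m) (Fin m) ℂ) := by
      ext j k
      rw [Matrix.mul_apply]
      have hAe : ∀ (i : Fin (M + L - 1)) (c : Fin m), A i c = (Toep L M e) i (idx c) := by
        intro i c; rw [hA]; rfl
      have hmain : ∀ c : Fin m, A (rix (idx j) ℓ1) (c) =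
          if idx j = idx c then e ℓ1 else 0 := by
        intro c
        rw [hAe, Toep]
        simp only [Matrix.of_apply]
        have hv : ((rix (idx j) ℓ1 : Fin (M+L-1)) : ℕ) = (idx j : ℕ) + (ℓ1 : ℕ) := rfl
        have hℓ1lt := ℓ1.isLt
        by_cases hjc : idx j = idx c
        · rw [if_pos hjc, ← hjc]
          split_ifs with hc
          · refine congrArg e (Fin.ext ?_)
            simp only [Fin.val_mk]
            omega
          · exact absurd ⟨by omega, by omega⟩ hc
        · rw [if_neg hjc]
          have hjc' : (idx j : ℕ) ≠ (idx c : ℕ) := fun hh => hjc (Fin.ext hh)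
          split_ifs with hc
          · refine huniq _ (fun hh => ?_)
            have := congrArg (fun x : Fin L => (x : ℕ)) hh
            simp only [Fin.val_mk] at this
            omega
          · rfl
      have hsum : ∑ i : Fin (M + L - 1), (Aᴴ) j i * A i k
          = (starRingEnd ℂ) (A (rix (idx j) ℓ1) j) * A (rix (idx j) ℓ1) k := by
        refine Finset.sum_eq_single (rix (idx j) ℓ1) (fun i _ hi => ?_)
          (fun hb => absurd (mem_univ _) hb)
        have hzero : A i j = 0 := by
          rw [hAe, Toep]
          simp only [Matrix.of_apply]
          split_ifs with hc
          · refine huniq _ (fun hh => ?_)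
            apply hi
            have := congrArg (fun x : Fin L => (x : ℕ)) hh
            simp only [Fin.val_mk] at this
            exact Fin.ext (by simp only [rix, Fin.val_mk]; omega)
          · rfl
        rw [Matrix.conjTranspose_apply, hzero, star_zero, zero_mul]
      rw [hsum, hmain j, hmain k, if_pos rfl]
      by_cases hjk : j = k
      · subst hjk
        rw [if_pos rfl, ← Complex.normSq_eq_conj_mul_self, habs]
        simp [Matrix.smul_apply, Matrix.one_apply_eq]
      · have hne2 : idx j ≠ idx k := fun hh => hjk (hidx.injective hh)
        rw [if_neg hne2, mul_zero, Matrix.smul_apply, Matrix.one_apply_ne hjk, smul_zero]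
    rw [hgram, Matrix.det_smul, Matrix.det_one, mul_one, Fintype.card_fin]
    rw [← pow_mul, ← Complex.ofReal_pow]
    exact Complex.ofReal_re _
end

section
/- Let N, M, L be positive integers and let A_1, …, A_L be complex N×M matrices such that for every nonzero h ∈ ℂ^M the Gram matrix H(h)ᴴH(h) is nonsingular. Let Σ be an M×M Hermitian positive definite complex matrix and fix ℓ ∈ {1, …, L}. For h ≠ 0 let q_ℓ(h) = ([(H(h)ᴴH(h))^{-1}]_{ℓℓ})^{-1}, a positive real. Then there exists a constant C > 0 such that for every a > 0, ∫_{ℂ^M} exp(−a·q_ℓ(h)) · (π^M det Σ)^{-1} exp(−hᴴΣ^{-1}h) dh ≤ C·a^{-M}, the integral being with respect to Lebesgue measure on ℂ^M (the integrand being defined arbitrarily at h = 0). -/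
open Matrix MeasureTheory ComplexOrder

lemma gram_posDef {N L : ℕ} (B : Matrix (Fin N) (Fin L) ℂ)
    (hdet : (Bᴴ * B).det ≠ 0) : (Bᴴ * B).PosDef := by
  refine PosDef.of_dotProduct_mulVec_pos (isHermitian_conjTranspose_mul_self B) fun x hx => ?_
  have hsd := (posSemidef_conjTranspose_mul_self B).dotProduct_mulVec_nonneg x
  rcases hsd.lt_or_eq with hlt | heq
  · exact hlt
  · exfalso
    have hkey : star x ⬝ᵥ ((Bᴴ * B) *ᵥ x) = star (B *ᵥ x) ⬝ᵥ (B *ᵥ x) := by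
      rw [star_mulVec, ← mulVec_mulVec, dotProduct_mulVec]
    have hBx : B *ᵥ x = 0 := by
      rw [← dotProduct_star_self_eq_zero (v := B *ᵥ x), ← hkey, ← heq]
    have hGx : (Bᴴ * B) *ᵥ x = 0 := by
      rw [← mulVec_mulVec, hBx, mulVec_zero]
    have hinj : Function.Injective ((Bᴴ * B).mulVec) :=
      mulVec_injective_iff_isUnit.mpr ((isUnit_iff_isUnit_det _).mpr hdet.isUnit)
    exact hx (hinj (by rw [hGx, mulVec_zero]))

lemma posDef_diag_re_pos {n : ℕ} {M : Matrix (Fin n) (Fin n) ℂ} (hM : M.PosDef) (i : Fin n) :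
    0 < (M i i).re := by
  have hne : (Pi.single i 1 : Fin n → ℂ) ≠ 0 := fun h => by simpa using congr_fun h i
  have := hM.re_dotProduct_pos hne
  simpa [dotProduct, mulVec, Pi.single_apply, Finset.mul_sum, apply_ite] using this

lemma integrable_cgauss {b : ℝ} (hb : 0 < b) :
    Integrable (fun z : ℂ => Real.exp (-(b * Complex.normSq z))) := by
  have h1 : Integrable (fun p : ℝ × ℝ => Real.exp (-b * p.1 ^ 2) * Real.exp (-b * p.2 ^ 2)) :=
    (integrable_exp_neg_mul_sq hb).mul_prod (integrable_exp_neg_mul_sq hb)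
  have h2 := (Complex.volume_preserving_equiv_real_prod.integrable_comp_emb
    Complex.measurableEquivRealProd.measurableEmbedding).mpr h1
  convert h2 using 2 with z
  · rfl
  simp only [Function.comp_apply, Complex.measurableEquivRealProd_apply]
  rw [← Real.exp_add, Complex.normSq_apply]
  ring_nf

lemma integral_cgauss {b : ℝ} (hb : 0 < b) :
    ∫ z : ℂ, Real.exp (-(b * Complex.normSq z)) = Real.pi / b := by
  have h := Complex.volume_preserving_equiv_real_prod.integral_comp
    Complex.measurableEquivRealProd.measurableEmbedding
    (fun p : ℝ × ℝ => Real.exp (-b * p.1 ^ 2) * Real.exp (-b * p.2 ^ 2))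
  have heq : (fun z : ℂ => Real.exp (-(b * Complex.normSq z)))
      = fun z : ℂ => Real.exp (-b * z.re ^ 2) * Real.exp (-b * z.im ^ 2) := by
    funext z
    rw [← Real.exp_add, Complex.normSq_apply]
    ring_nf
  rw [heq]
  calc (∫ z : ℂ, Real.exp (-b * z.re ^ 2) * Real.exp (-b * z.im ^ 2))
      = ∫ p : ℝ × ℝ, Real.exp (-b * p.1 ^ 2) * Real.exp (-b * p.2 ^ 2) := h
    _ = (∫ x : ℝ, Real.exp (-b * x ^ 2)) * ∫ x : ℝ, Real.exp (-b * x ^ 2) := by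
        rw [Measure.volume_eq_prod]; exact integral_prod_mul (L := ℝ) (fun x => Real.exp (-b * x ^ 2)) (fun x => Real.exp (-b * x ^ 2))
    _ = Real.sqrt (Real.pi / b) * Real.sqrt (Real.pi / b) := by rw [integral_gaussian]
    _ = Real.pi / b := Real.mul_self_sqrt (by positivity)

/-- `Hmat A h` is the `N × L` matrix whose `ℓ`-th column is `A ℓ *ᵥ h`. -/
noncomputable def Hmat {N M L : ℕ} (A : Fin L → Matrix (Fin N) (Fin M) ℂ)
    (h : Fin M → ℂ) : Matrix (Fin N) (Fin L) ℂ :=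
  Matrix.of fun n l => (A l).mulVec h n

/-- Suppose `H(h)ᴴ H(h)` is nonsingular for every nonzero `h`, `Σ` is
Hermitian positive definite, and for `h ≠ 0` let
`q(h) = ([(H(h)ᴴH(h))⁻¹]_{ℓℓ})⁻¹ > 0` (defined arbitrarily at `h = 0`). Then there is a
constant `C > 0` such that for every `a > 0`,
`∫ exp(−a q(h)) (π^M det Σ)⁻¹ exp(−hᴴΣ⁻¹h) dh ≤ C a^{−M}`. -/
theorem stmt13 (N M L : ℕ) (hN : 0 < N) (hM : 0 < M) (hL : 0 < L)
    (A : Fin L → Matrix (Fin N) (Fin M) ℂ)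
    (hns : ∀ h : Fin M → ℂ, h ≠ 0 → ((Hmat A h)ᴴ * Hmat A h).det ≠ 0)
    (S : Matrix (Fin M) (Fin M) ℂ) (hS : S.PosDef) (ℓ : Fin L)
    (q : (Fin M → ℂ) → ℝ)
    (hq : ∀ h : Fin M → ℂ, h ≠ 0 →
      q h = ((((Hmat A h)ᴴ * Hmat A h)⁻¹ ℓ ℓ).re)⁻¹) :
    ∃ C : ℝ, 0 < C ∧ ∀ a : ℝ, 0 < a →
      (∫ h : Fin M → ℂ,
          Real.exp (-(a * q h)) *
            ((Real.pi ^ M * S.det.re)⁻¹ *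
              Real.exp (-(((fun i => star (h i)) ⬝ᵥ (S⁻¹ *ᵥ h)).re)))) ≤
        C * (a ^ M)⁻¹ := by
  classical
  set G : (Fin M → ℂ) → Matrix (Fin L) (Fin L) ℂ :=
    fun h => (Hmat A h)ᴴ * Hmat A h with hG
  set Q : (Fin M → ℂ) → ℝ := fun h => (((G h)⁻¹ ℓ ℓ).re)⁻¹ with hQdef
  -- positivity of Q on nonzero vectors
  have hQpos : ∀ h : Fin M → ℂ, h ≠ 0 → 0 < ((G h)⁻¹ ℓ ℓ).re := by
    intro h hh
    exact posDef_diag_re_pos ((gram_posDef (Hmat A h) (hns h hh)).inv) ℓ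
  -- homogeneity
  have hsmul : ∀ (r : ℝ) (h : Fin M → ℂ), Hmat A (((r : ℂ)) • h) = (r : ℂ) • Hmat A h := by
    intro r h
    ext n l
    simp [Hmat, Matrix.mulVec_smul]
  have hGsmul : ∀ (r : ℝ) (h : Fin M → ℂ),
      G (((r : ℂ)) • h) = ((r ^ 2 : ℝ) : ℂ) • G h := by
    intro r h
    rw [hG]
    simp only [hsmul, conjTranspose_smul, Matrix.smul_mul, Matrix.mul_smul, smul_smul]
    congr 1
    rw [Complex.star_def, Complex.conj_ofReal]
    push_cast
    ring
  have hQsmul : ∀ (r : ℝ), 0 < r → ∀ h : Fin M → ℂ, h ≠ 0 →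
      Q (((r : ℂ)) • h) = r ^ 2 * Q h := by
    intro r hr h hh
    have hk : ((r ^ 2 : ℝ) : ℂ) ≠ 0 := by
      simp only [ne_eq, Complex.ofReal_eq_zero]
      positivity
    have hGinv : (G (((r : ℂ)) • h))⁻¹ = ((r ^ 2 : ℝ) : ℂ)⁻¹ • (G h)⁻¹ := by
      apply Matrix.inv_eq_left_inv
      rw [hGsmul, Matrix.smul_mul, Matrix.mul_smul, smul_smul,
        Matrix.nonsing_inv_mul _ (hns h hh).isUnit, inv_mul_cancel₀ hk, one_smul]
    rw [hQdef]
    simp only [hGinv, Matrix.smul_apply, smul_eq_mul]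
    rw [← Complex.ofReal_inv, Complex.re_ofReal_mul, mul_inv, inv_inv]
  -- continuity of Q away from 0
  have contH : Continuous fun h : Fin M → ℂ => Hmat A h := by
    apply continuous_matrix
    intro n l
    simp only [Hmat, Matrix.of_apply, Matrix.mulVec, dotProduct]
    exact continuous_finset_sum _ fun m _ => continuous_const.mul (continuous_apply m)
  have contG : Continuous G := contH.matrix_conjTranspose.matrix_mul contH
  have hinv_eq : ∀ h : Fin M → ℂ, (G h)⁻¹ ℓ ℓ = ((G h).det)⁻¹ * (G h).adjugate ℓ ℓ := by
    intro h
    rw [Matrix.inv_def, Matrix.smul_apply, smul_eq_mul, Ring.inverse_eq_inv']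
  have contQ : ContinuousOn Q {h : Fin M → ℂ | h ≠ 0} := by
    have c1 : ContinuousOn (fun h : Fin M → ℂ => ((G h).det)⁻¹ * (G h).adjugate ℓ ℓ)
        {h : Fin M → ℂ | h ≠ 0} := by
      refine ContinuousOn.mul (ContinuousOn.inv₀ contG.matrix_det.continuousOn ?_)
        ((contG.matrix_adjugate.matrix_elem ℓ ℓ).continuousOn)
      intro h hh
      exact hns h hh
    have c2 : ContinuousOn (fun h : Fin M → ℂ => ((G h)⁻¹ ℓ ℓ).re) {h : Fin M → ℂ | h ≠ 0} := by
      have := (Complex.continuous_re.comp_continuousOn c1)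
      refine this.congr fun h _ => ?_
      simp only [Function.comp_apply, hinv_eq h]
    exact ContinuousOn.inv₀ c2 fun h hh => (hQpos h hh).ne'
  -- minimum over the sphere
  have hnontriv : Nonempty (Fin M) := ⟨⟨0, hM⟩⟩
  set u0 : Fin M → ℂ := fun _ => (1 : ℂ) with hu0
  have hu0mem : u0 ∈ Metric.sphere (0 : Fin M → ℂ) 1 := by
    simp [hu0, pi_norm_const]
  have hsub : Metric.sphere (0 : Fin M → ℂ) 1 ⊆ {h : Fin M → ℂ | h ≠ 0} := by
    intro h hh
    simp only [Metric.mem_sphere, dist_zero_right] at hh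
    intro h0
    rw [h0] at hh
    simp at hh
  obtain ⟨z, hz, hzmin⟩ := (isCompact_sphere (0 : Fin M → ℂ) 1).exists_isMinOn
    ⟨u0, hu0mem⟩ (contQ.mono hsub)
  set c0 : ℝ := Q z with hc0
  have hzne : z ≠ 0 := hsub hz
  have hc0pos : 0 < c0 := by
    rw [hc0, hQdef]
    exact inv_pos.mpr (hQpos z hzne)
  -- lower bound
  have hlow : ∀ h : Fin M → ℂ, h ≠ 0 → c0 * ‖h‖ ^ 2 ≤ Q h := by
    intro h hh
    have hr : 0 < ‖h‖ := norm_pos_iff.mpr hh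
    set u : Fin M → ℂ := ((‖h‖⁻¹ : ℝ) : ℂ) • h with hu
    have hun : ‖u‖ = 1 := by
      rw [hu, norm_smul]
      simp [abs_of_pos (inv_pos.mpr hr), inv_mul_cancel₀ hr.ne']
    have hune : u ≠ 0 := by
      intro h0; rw [h0] at hun; simp at hun
    have hhu : h = ((‖h‖ : ℝ) : ℂ) • u := by
      rw [hu, smul_smul, ← Complex.ofReal_mul, mul_inv_cancel₀ hr.ne']
      simp
    have heq2 := hQsmul ‖h‖ hr u hune
    rw [← hhu] at heq2
    rw [heq2]
    have hum : u ∈ Metric.sphere (0 : Fin M → ℂ) 1 := by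
      simp [Metric.mem_sphere, dist_zero_right, hun]
    have hc0u : c0 ≤ Q u := hzmin hum
    nlinarith [sq_nonneg ‖h‖, hr]
  -- constants
  have hdetre : 0 < S.det.re := by
    have := hS.det_pos
    rw [Complex.lt_def] at this
    simpa using this.1
  set K : ℝ := (Real.pi ^ M * S.det.re)⁻¹ with hK
  have hKpos : 0 < K := by
    rw [hK]
    positivity
  refine ⟨K * (Real.pi * M / c0) ^ M, by positivity, ?_⟩
  intro a ha
  set b : ℝ := a * c0 / M with hb
  have hbpos : 0 < b := by
    rw [hb]
    have : (0:ℝ) < M := by exact_mod_cast hM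
    positivity
  -- a.e. nonzero
  haveI : NoAtoms (volume : Measure (Fin M → ℂ)) := Measure.pi_noAtoms ⟨0, hM⟩
  have hae : ∀ᵐ h : Fin M → ℂ, h ≠ 0 := by
    rw [MeasureTheory.ae_iff]
    have : {h : Fin M → ℂ | ¬h ≠ 0} = {0} := by ext h; simp
    rw [this]
    exact measure_singleton 0
  set g : (Fin M → ℂ) → ℝ :=
    fun h => K * ∏ i, Real.exp (-(b * Complex.normSq (h i))) with hg
  have hgi : Integrable g := (Integrable.fintype_prod (f := fun (_ : Fin M) (z : ℂ) => Real.exp (-(b * Complex.normSq z))) (fun _ => integrable_cgauss hbpos)).const_mul K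
  have hfnonneg : (0 : (Fin M → ℂ) → ℝ) ≤ᵐ[volume] fun h =>
      Real.exp (-(a * q h)) * ((Real.pi ^ M * S.det.re)⁻¹ *
        Real.exp (-(((fun i => star (h i)) ⬝ᵥ (S⁻¹ *ᵥ h)).re))) := by
    filter_upwards with h
    have : (0:ℝ) ≤ (Real.pi ^ M * S.det.re)⁻¹ := le_of_lt (by positivity)
    positivity
  have hfg : (fun h : Fin M → ℂ =>
      Real.exp (-(a * q h)) * ((Real.pi ^ M * S.det.re)⁻¹ *
        Real.exp (-(((fun i => star (h i)) ⬝ᵥ (S⁻¹ *ᵥ h)).re)))) ≤ᵐ[volume] g := by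
    filter_upwards [hae] with h hh
    have hq' : q h = Q h := hq h hh
    have hexp2 : Real.exp (-(((fun i => star (h i)) ⬝ᵥ (S⁻¹ *ᵥ h)).re)) ≤ 1 := by
      rw [Real.exp_le_one_iff, neg_nonpos]
      have : (fun i => star (h i)) = star h := rfl
      rw [this]
      exact (hS.inv.posSemidef).re_dotProduct_nonneg h
    have hsum : ∑ i, Complex.normSq (h i) ≤ (M : ℝ) * ‖h‖ ^ 2 := by
      have : ∀ i, Complex.normSq (h i) ≤ ‖h‖ ^ 2 := by
        intro i
        rw [← Complex.sq_norm]
        have := norm_le_pi_norm h i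
        nlinarith [norm_nonneg (h i), norm_nonneg h]
      calc ∑ i, Complex.normSq (h i) ≤ ∑ _i : Fin M, ‖h‖ ^ 2 :=
            Finset.sum_le_sum fun i _ => this i
        _ = (M : ℝ) * ‖h‖ ^ 2 := by simp [Finset.sum_const, mul_comm]
    have hexp1 : Real.exp (-(a * q h)) ≤ ∏ i, Real.exp (-(b * Complex.normSq (h i))) := by
      rw [← Real.exp_sum]
      apply Real.exp_le_exp.mpr
      rw [hq']
      have hMpos : (0:ℝ) < M := by exact_mod_cast hM
      have h1 : b * ∑ i, Complex.normSq (h i) ≤ a * c0 * ‖h‖ ^ 2 := by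
        rw [hb]
        calc a * c0 / M * ∑ i, Complex.normSq (h i)
            ≤ a * c0 / M * ((M:ℝ) * ‖h‖ ^ 2) := by
              apply mul_le_mul_of_nonneg_left hsum
              positivity
          _ = a * c0 * ‖h‖ ^ 2 := by field_simp
      have h2 : a * (c0 * ‖h‖ ^ 2) ≤ a * Q h :=
        mul_le_mul_of_nonneg_left (hlow h hh) ha.le
      have hsum' : ∑ i, -(b * Complex.normSq (h i)) = -(b * ∑ i, Complex.normSq (h i)) := by
        simp [Finset.mul_sum]
      rw [hsum']
      nlinarith
    calc Real.exp (-(a * q h)) * ((Real.pi ^ M * S.det.re)⁻¹ *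
          Real.exp (-(((fun i => star (h i)) ⬝ᵥ (S⁻¹ *ᵥ h)).re)))
        ≤ (∏ i, Real.exp (-(b * Complex.normSq (h i)))) * ((Real.pi ^ M * S.det.re)⁻¹ * 1) := by
          apply mul_le_mul hexp1
          · exact mul_le_mul_of_nonneg_left hexp2 (le_of_lt (by positivity))
          · positivity
          · positivity
      _ = g h := by rw [hg, hK]; ring
  have hint : (∫ h : Fin M → ℂ,
      Real.exp (-(a * q h)) * ((Real.pi ^ M * S.det.re)⁻¹ *
        Real.exp (-(((fun i => star (h i)) ⬝ᵥ (S⁻¹ *ᵥ h)).re)))) ≤ ∫ h, g h :=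
    integral_mono_of_nonneg hfnonneg hgi hfg
  have hgval : (∫ h, g h) = K * (Real.pi / b) ^ M := by
    rw [hg]
    rw [MeasureTheory.integral_const_mul]
    congr 1
    rw [integral_fintype_prod_volume_eq_pow (ι := Fin M) (fun z : ℂ => Real.exp (-(b * Complex.normSq z)))]
    rw [integral_cgauss hbpos, Fintype.card_fin]
  refine hint.trans ?_
  rw [hgval]
  have : (Real.pi / b) ^ M = (Real.pi * M / c0) ^ M * (a ^ M)⁻¹ := by
    rw [← inv_pow, ← mul_pow]
    congr 1
    rw [hb]
    field_simp
  rw [this, ← mul_assoc]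
end

section
/- Let Q(z) = ∫_z^∞ (2π)^{-1/2} e^{−x²/2} dx denote the Gaussian tail function. Then for every real z ≥ 0 and every t ∈ [0, 1]: 4(1−t)·Q(z) − 4(1−t)²·Q(z)² ≤ (1−t²)·e^{−z²/2}. -/
open MeasureTheory Real Set

lemma gauss_integrable : Integrable (fun x : ℝ => Real.exp (-(x^2/2))) := by
  have := integrable_exp_neg_mul_sq (by norm_num : (0:ℝ) < 1/2)
  convert this using 2 with x
  ring_nf

lemma polar_calc (z : ℝ) (hz : 0 ≤ z) :
    ∫ p in polarCoord.symm '' (Ioo (0:ℝ) z ×ˢ Ioo (0:ℝ) (π/2)),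
      Real.exp (-((p.1^2 + p.2^2)/2)) = (1 - Real.exp (-(z^2/2))) * (π/2) := by
  set B : ℝ × ℝ → ℝ × ℝ →L[ℝ] ℝ × ℝ := fun p =>
    LinearMap.toContinuousLinearMap (Matrix.toLin (Module.Basis.finTwoProd ℝ) (Module.Basis.finTwoProd ℝ)
      !![cos p.2, -p.1 * sin p.2; sin p.2, p.1 * cos p.2]) with hB
  have B_det : ∀ p, (B p).det = p.1 := by
    intro p
    conv_rhs => rw [← one_mul p.1, ← cos_sq_add_sin_sq p.2]
    simp only [hB, neg_mul, LinearMap.det_toContinuousLinearMap, LinearMap.det_toLin,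
      Matrix.det_fin_two_of, sub_neg_eq_add]
    ring
  have hsub : (Ioo (0:ℝ) z ×ˢ Ioo (0:ℝ) (π/2) : Set (ℝ × ℝ)) ⊆ polarCoord.target := by
    apply Set.prod_mono
    · exact Ioo_subset_Ioi_self
    · intro x hx
      constructor
      · linarith [hx.1, Real.pi_pos]
      · linarith [hx.2, Real.pi_pos]
  have hs : MeasurableSet (Ioo (0:ℝ) z ×ˢ Ioo (0:ℝ) (π/2) : Set (ℝ × ℝ)) :=
    measurableSet_Ioo.prod measurableSet_Ioo
  rw [integral_image_eq_integral_abs_det_fderiv_smul volume hs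
      (fun p _ => (hasFDerivAt_polarCoord_symm p).hasFDerivWithinAt)
      (polarCoord.symm.injOn.mono hsub) _]
  have : ∀ p ∈ (Ioo (0:ℝ) z ×ˢ Ioo (0:ℝ) (π/2) : Set (ℝ × ℝ)),
      |(B p).det| • Real.exp (-(((polarCoord.symm p).1^2 + (polarCoord.symm p).2^2)/2))
        = (p.1 * Real.exp (-(p.1^2/2))) * 1 := by
    rintro ⟨r, θ⟩ hp
    have hr : 0 < r := hp.1.1
    have : (r * cos θ)^2 + (r * sin θ)^2 = r^2 := by
      have := sin_sq_add_cos_sq θ; nlinarith [this]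
    simp only [B_det, abs_of_pos hr, polarCoord_symm_apply, smul_eq_mul, this, mul_one]
  rw [show fderivPolarCoordSymm = B from rfl]
  rw [setIntegral_congr_fun hs this]
  rw [Measure.volume_eq_prod]
  rw [MeasureTheory.setIntegral_prod_mul (fun r => r * Real.exp (-(r^2/2))) (fun _ => (1:ℝ))]
  have h1 : ∫ r in Ioo (0:ℝ) z, r * Real.exp (-(r^2/2)) = 1 - Real.exp (-(z^2/2)) := by
    rw [← integral_Ioc_eq_integral_Ioo, ← intervalIntegral.integral_of_le hz]
    have hd : ∀ x ∈ Set.uIcc (0:ℝ) z, HasDerivAt (fun x => -Real.exp (-(x^2/2)))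
        (x * Real.exp (-(x^2/2))) x := by
      intro x _
      have h1 : HasDerivAt (fun x : ℝ => -(x^2/2)) (-x) x := by
        have := (hasDerivAt_pow 2 x).div_const 2
        convert this.neg using 1
        all_goals first | rfl | norm_num
      have := (h1.exp).neg
      convert this using 1
      all_goals first | rfl | ring
    rw [intervalIntegral.integral_eq_sub_of_hasDerivAt hd]
    · simp; ring
    · apply Continuous.intervalIntegrable; continuity
  have h2 : ∫ _ in Ioo (0:ℝ) (π/2), (1:ℝ) = π/2 := by
    simp; positivity
  rw [h1, h2]


lemma key1 (z : ℝ) (hz : 0 ≤ z) :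
    (π/2) * (1 - Real.exp (-(z^2/2))) ≤ (∫ x in Ioo (0:ℝ) z, Real.exp (-(x^2/2)))^2 := by
  have hg2 : Integrable (fun p : ℝ × ℝ => Real.exp (-(p.1^2/2)) * Real.exp (-(p.2^2/2))) := by
    rw [Measure.volume_eq_prod]
    exact gauss_integrable.mul_prod gauss_integrable
  have hsq : (∫ x in Ioo (0:ℝ) z, Real.exp (-(x^2/2)))^2
      = ∫ p in (Ioo (0:ℝ) z ×ˢ Ioo (0:ℝ) z), Real.exp (-((p.1^2 + p.2^2)/2)) := by
    have hcong : ∫ p in (Ioo (0:ℝ) z ×ˢ Ioo (0:ℝ) z), Real.exp (-((p.1^2 + p.2^2)/2))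
        = ∫ p in (Ioo (0:ℝ) z ×ˢ Ioo (0:ℝ) z), Real.exp (-(p.1^2/2)) * Real.exp (-(p.2^2/2)) := by
      apply setIntegral_congr_fun (measurableSet_Ioo.prod measurableSet_Ioo)
      intro p _
      simp only [← Real.exp_add]
      ring_nf
    rw [hcong, Measure.volume_eq_prod,
      MeasureTheory.setIntegral_prod_mul (fun x => Real.exp (-(x^2/2)))
        (fun x => Real.exp (-(x^2/2))), sq]
  have himg : polarCoord.symm '' (Ioo (0:ℝ) z ×ˢ Ioo (0:ℝ) (π/2))
      ⊆ (Ioo (0:ℝ) z ×ˢ Ioo (0:ℝ) z) := by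
    rintro _ ⟨⟨r, θ⟩, ⟨⟨hr0, hrz⟩, ⟨hθ0, hθπ⟩⟩, rfl⟩
    have hc : 0 < Real.cos θ := Real.cos_pos_of_mem_Ioo ⟨by linarith [Real.pi_pos], hθπ⟩
    have hs : 0 < Real.sin θ := Real.sin_pos_of_pos_of_lt_pi hθ0 (by linarith [Real.pi_pos])
    have hc1 : Real.cos θ ≤ 1 := Real.cos_le_one θ
    have hs1 : Real.sin θ ≤ 1 := Real.sin_le_one θ
    simp only [polarCoord_symm_apply, Set.mem_prod, Set.mem_Ioo]
    constructor
    · constructor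
      · positivity
      · nlinarith
    · constructor
      · positivity
      · nlinarith
  have hmono : ∫ p in polarCoord.symm '' (Ioo (0:ℝ) z ×ˢ Ioo (0:ℝ) (π/2)),
        Real.exp (-((p.1^2 + p.2^2)/2))
      ≤ ∫ p in (Ioo (0:ℝ) z ×ˢ Ioo (0:ℝ) z), Real.exp (-((p.1^2 + p.2^2)/2)) := by
    apply setIntegral_mono_set
    · apply Integrable.integrableOn
      convert hg2 using 2 with p
      rw [← Real.exp_add]
      ring_nf
    · filter_upwards with p; positivity
    · exact HasSubset.Subset.eventuallyLE himg
  rw [hsq]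
  calc (π/2) * (1 - Real.exp (-(z^2/2)))
      = ∫ p in polarCoord.symm '' (Ioo (0:ℝ) z ×ˢ Ioo (0:ℝ) (π/2)),
          Real.exp (-((p.1^2 + p.2^2)/2)) := by
        rw [polar_calc z hz]; ring
    _ ≤ _ := hmono


/-- The Gaussian tail function `Q(z) = (1/√(2π)) ∫_z^∞ e^{−x²/2} dx`. -/
noncomputable def gaussQ (z : ℝ) : ℝ :=
  ∫ x in Set.Ioi z, (2 * Real.pi) ^ (-(1 / 2 : ℝ)) * Real.exp (-(x ^ 2 / 2))

lemma key2 (z : ℝ) (hz : 0 ≤ z) :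
    gaussQ z = 1/2 - (Real.sqrt (2*π))⁻¹ * ∫ x in Ioo (0:ℝ) z, Real.exp (-(x^2/2)) := by
  have hc : ((2 * π : ℝ)) ^ (-(1 / 2 : ℝ)) = (Real.sqrt (2*π))⁻¹ := by
    rw [Real.rpow_neg (by positivity), Real.sqrt_eq_rpow]
  have hQ : gaussQ z = (Real.sqrt (2*π))⁻¹ * ∫ x in Ioi z, Real.exp (-(x^2/2)) := by
    rw [gaussQ, ← integral_const_mul]
    simp_rw [hc]
  have hIoi0 : ∫ x in Ioi (0:ℝ), Real.exp (-(x^2/2)) = Real.sqrt (2*π) / 2 := by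
    have := integral_gaussian_Ioi (1/2)
    rw [show (π / (1/2) : ℝ) = 2 * π by ring] at this
    rw [← this]
    apply setIntegral_congr_fun measurableSet_Ioi
    intro x _
    ring_nf
  have hsplit : (∫ x in Ioc (0:ℝ) z, Real.exp (-(x^2/2)))
      + ∫ x in Ioi z, Real.exp (-(x^2/2)) = Real.sqrt (2*π) / 2 := by
    rw [← hIoi0, ← setIntegral_union (Set.Ioc_disjoint_Ioi le_rfl) measurableSet_Ioi
      gauss_integrable.integrableOn gauss_integrable.integrableOn,
      Set.Ioc_union_Ioi_eq_Ioi hz]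
  have hpos : (0:ℝ) < Real.sqrt (2*π) := Real.sqrt_pos.2 (by positivity)
  rw [hQ, ← integral_Ioc_eq_integral_Ioo]
  have hI : ∫ x in Ioi z, Real.exp (-(x^2/2))
      = Real.sqrt (2*π)/2 - ∫ x in Ioc (0:ℝ) z, Real.exp (-(x^2/2)) := by linarith
  rw [hI, mul_sub, ← mul_div_assoc, inv_mul_cancel₀ hpos.ne']

lemma gaussQ_nonneg (z : ℝ) : 0 ≤ gaussQ z := by
  apply setIntegral_nonneg measurableSet_Ioi
  intro x _
  positivity

/-- For every `z ≥ 0` and `t ∈ [0,1]`,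
`4(1−t) Q(z) − 4(1−t)² Q(z)² ≤ (1−t²) e^{−z²/2}`. -/
theorem stmt14 (z t : ℝ) (hz : 0 ≤ z) (ht0 : 0 ≤ t) (ht1 : t ≤ 1) :
    4 * (1 - t) * gaussQ z - 4 * (1 - t) ^ 2 * (gaussQ z) ^ 2 ≤
      (1 - t ^ 2) * Real.exp (-(z ^ 2 / 2)) := by
  set q := gaussQ z with hq
  set E := Real.exp (-(z^2/2)) with hE
  set J := ∫ x in Ioo (0:ℝ) z, Real.exp (-(x^2/2)) with hJ
  have hkey1 : (π/2) * (1 - E) ≤ J^2 := key1 z hz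
  have hqJ : q = 1/2 - (Real.sqrt (2*π))⁻¹ * J := key2 z hz
  have hJ0 : 0 ≤ J := by
    apply setIntegral_nonneg measurableSet_Ioo
    intro x _; positivity
  have hspos : (0:ℝ) < Real.sqrt (2*π) := Real.sqrt_pos.2 (by positivity)
  have hq2 : q ≤ 1/2 := by
    rw [hqJ]
    have : 0 ≤ (Real.sqrt (2*π))⁻¹ * J := by positivity
    linarith
  have hq0 : 0 ≤ q := gaussQ_nonneg z
  have hE0 : 0 < E := Real.exp_pos _
  have hEle : E ≤ 1 := Real.exp_le_one_iff.2 (by nlinarith [sq_nonneg z])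
  -- the t = 0 case: 4q - 4q² ≤ E
  have hcase0 : 4*q - 4*q^2 ≤ E := by
    have hsq : (Real.sqrt (2*π))^2 = 2*π := Real.sq_sqrt (by positivity)
    have h1 : 4*q - 4*q^2 = 1 - (2/π) * J^2 := by
      have e1 : 4*q - 4*q^2 = 1 - 4 * ((Real.sqrt (2*π))⁻¹)^2 * J^2 := by rw [hqJ]; ring
      rw [e1, inv_pow, hsq,
        show (4:ℝ) * (2*π)⁻¹ * J^2 = 2/π * J^2 from by
          rw [div_eq_mul_inv, mul_inv]; ring]
    rw [h1]
    have hπ : (0:ℝ) < π := Real.pi_pos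
    have := mul_le_mul_of_nonneg_left hkey1 (le_of_lt (by positivity : (0:ℝ) < 2/π))
    calc 1 - (2/π) * J^2 ≤ 1 - (2/π) * ((π/2) * (1 - E)) := by nlinarith
      _ = E := by field_simp; ring
  nlinarith [mul_nonneg (sub_nonneg.2 ht1) (sub_nonneg.2 hq2),
    mul_nonneg ht0 (sub_nonneg.2 ht1), sq_nonneg (1-t), mul_nonneg ht0 hq0,
    mul_nonneg (mul_nonneg ht0 ht0) hq0,
    mul_nonneg (mul_nonneg ht0 hq0) hq0,
    mul_le_mul_of_nonneg_left hcase0 (mul_nonneg ht0 (sub_nonneg.2 ht1))]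
end

section
/- Let K be a positive integer, let λ_1, …, λ_K > 0 and ε > 0 be reals. Define f : ℝ^K → ℝ by f(x) = (1/π)·∫_0^{π/2} ∏_{k=1}^K (1 + ε·λ_k·x_k/sin²θ)^{-1} dθ. Then f is a convex function on the convex set {x ∈ ℝ^K : x_k ≥ 0 for all k}. -/
open Real MeasureTheory Set

lemma orthant_convex (K : ℕ) : Convex ℝ {x : Fin K → ℝ | ∀ k, 0 ≤ x k} := by
  intro x hx y hy a b ha hb hab
  intro k
  have := hx k; have := hy k
  have : 0 ≤ a * x k + b * y k := by positivity
  simpa using this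

lemma neg_log_affine_convex (K : ℕ) (c : ℝ) (hc : 0 ≤ c) (k : Fin K) :
    ConvexOn ℝ {x : Fin K → ℝ | ∀ m, 0 ≤ x m}
      (fun x : Fin K → ℝ => -Real.log (1 + c * x k)) := by
  refine ⟨orthant_convex K, fun x hx y hy a b ha hb hab => ?_⟩
  have hnl : ConvexOn ℝ (Ioi (0:ℝ)) (fun t => -Real.log t) :=
    strictConcaveOn_log_Ioi.concaveOn.neg
  have hx' : (1 + c * x k) ∈ Ioi (0:ℝ) := by
    have := hx k; simp only [mem_Ioi]; nlinarith
  have hy' : (1 + c * y k) ∈ Ioi (0:ℝ) := by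
    have := hy k; simp only [mem_Ioi]; nlinarith
  have h := hnl.2 hx' hy' ha hb hab
  have harg : a • (1 + c * x k) + b • (1 + c * y k) = 1 + c * (a • x + b • y) k := by
    simp only [smul_eq_mul, Pi.add_apply, Pi.smul_apply]
    nlinarith [hab]
  rw [harg] at h
  simpa using h

lemma sum_neg_log_convex (K : ℕ) (c : Fin K → ℝ) (hc : ∀ k, 0 ≤ c k) :
    ConvexOn ℝ {x : Fin K → ℝ | ∀ m, 0 ≤ x m}
      (fun x : Fin K → ℝ => ∑ k : Fin K, -Real.log (1 + c k * x k)) := by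
  classical
  have : ∀ (s : Finset (Fin K)), ConvexOn ℝ {x : Fin K → ℝ | ∀ m, 0 ≤ x m}
      (fun x : Fin K → ℝ => ∑ k ∈ s, -Real.log (1 + c k * x k)) := by
    intro s
    induction s using Finset.induction with
    | empty => simpa using convexOn_const (0:ℝ) (orthant_convex K)
    | insert a s hns ih =>
        simpa [Finset.sum_insert hns, Pi.add_def] using (neg_log_affine_convex K (c a) (hc a) a).add ih
  simpa using this Finset.univ

lemma prod_inv_convex (K : ℕ) (c : Fin K → ℝ) (hc : ∀ k, 0 ≤ c k) :
    ConvexOn ℝ {x : Fin K → ℝ | ∀ m, 0 ≤ x m}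
      (fun x : Fin K → ℝ => ∏ k : Fin K, (1 + c k * x k)⁻¹) := by
  have hsum := sum_neg_log_convex K c hc
  have key : ∀ x ∈ {x : Fin K → ℝ | ∀ m, 0 ≤ x m},
      (∏ k : Fin K, (1 + c k * x k)⁻¹)
        = Real.exp (∑ k : Fin K, -Real.log (1 + c k * x k)) := by
    intro x hx
    rw [Real.exp_sum]
    refine Finset.prod_congr rfl fun k _ => ?_
    have hpos : 0 < 1 + c k * x k := by have := hx k; have := hc k; nlinarith
    rw [Real.exp_neg, Real.exp_log hpos]
  refine ⟨orthant_convex K, fun x hx y hy a b ha hb hab => ?_⟩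
  have hmem : a • x + b • y ∈ {x : Fin K → ℝ | ∀ m, 0 ≤ x m} :=
    (orthant_convex K) hx hy ha hb hab
  dsimp only
  rw [key _ hmem, key _ hx, key _ hy]
  simp only [smul_eq_mul]
  calc Real.exp (∑ k : Fin K, -Real.log (1 + c k * (a • x + b • y) k))
      ≤ Real.exp (a * (∑ k : Fin K, -Real.log (1 + c k * x k))
          + b * (∑ k : Fin K, -Real.log (1 + c k * y k))) := by
        apply Real.exp_le_exp.mpr
        simpa using hsum.2 hx hy ha hb hab
    _ ≤ a * Real.exp (∑ k : Fin K, -Real.log (1 + c k * x k))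
          + b * Real.exp (∑ k : Fin K, -Real.log (1 + c k * y k)) := by
        have h2 := convexOn_exp.2 (mem_univ (∑ k : Fin K, -Real.log (1 + c k * x k)))
          (mem_univ (∑ k : Fin K, -Real.log (1 + c k * y k))) ha hb hab
        simpa using h2

/-- For `λ_k > 0` and `ε > 0`, the function
`f(x) = (1/π) ∫₀^{π/2} ∏_k (1 + ε λ_k x_k / sin²θ)⁻¹ dθ`
is convex on the nonnegative orthant of `ℝ^K`. -/
theorem stmt17 (K : ℕ) (hK : 0 < K) (lam : Fin K → ℝ) (hlam : ∀ k, 0 < lam k)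
    (ε : ℝ) (hε : 0 < ε) :
    ConvexOn ℝ {x : Fin K → ℝ | ∀ k, 0 ≤ x k}
      (fun x : Fin K → ℝ =>
        (1 / Real.pi) * ∫ θ in (0 : ℝ)..(Real.pi / 2),
          ∏ k : Fin K, (1 + ε * lam k * x k / Real.sin θ ^ 2)⁻¹) := by
  set s : Set (Fin K → ℝ) := {x : Fin K → ℝ | ∀ k, 0 ≤ x k} with hs
  -- the integrand, rewritten with coefficients depending on θ
  have hrw : ∀ (θ : ℝ) (x : Fin K → ℝ) (k : Fin K),
      (1 + ε * lam k * x k / Real.sin θ ^ 2)⁻¹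
        = (1 + (ε * lam k / Real.sin θ ^ 2) * x k)⁻¹ := by
    intro θ x k; ring_nf
  have hcnn : ∀ (θ : ℝ) (k : Fin K), 0 ≤ ε * lam k / Real.sin θ ^ 2 := by
    intro θ k
    have := (hlam k).le
    positivity
  -- integrability
  have hint : ∀ x ∈ s, IntervalIntegrable
      (fun θ => ∏ k : Fin K, (1 + ε * lam k * x k / Real.sin θ ^ 2)⁻¹)
      volume 0 (Real.pi / 2) := by
    intro x hx
    rw [intervalIntegrable_iff]
    constructor
    · apply Measurable.aestronglyMeasurable
      apply Finset.measurable_prod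
      intro k _
      exact ((measurable_const.add
        ((measurable_const.mul measurable_const).div
          (Real.measurable_sin.pow measurable_const))).inv).comp measurable_id
    · haveI : IsFiniteMeasure (volume.restrict (Set.uIoc (0:ℝ) (Real.pi/2))) := by
        constructor
        rw [Measure.restrict_apply_univ, uIoc_of_le (by positivity : (0:ℝ) ≤ Real.pi/2)]
        exact measure_Ioc_lt_top
      apply MeasureTheory.HasFiniteIntegral.of_bounded (C := 1)
      filter_upwards with θ
      have hterm : ∀ k : Fin K, 0 ≤ ε * lam k * x k / Real.sin θ ^ 2 := by
        intro k
        have h1 := (hlam k).le; have h2 := hx k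
        positivity
      have h0 : ∀ k ∈ Finset.univ, (0:ℝ) ≤ (1 + ε * lam k * x k / Real.sin θ ^ 2)⁻¹ := by
        intro k _
        have := hterm k; positivity
      have h1 : ∀ k ∈ Finset.univ, (1 + ε * lam k * x k / Real.sin θ ^ 2)⁻¹ ≤ 1 := by
        intro k _
        have := hterm k
        rw [inv_le_one_iff₀]; right; linarith
      have hle : (∏ k : Fin K, (1 + ε * lam k * x k / Real.sin θ ^ 2)⁻¹) ≤ 1 :=
        Finset.prod_le_one h0 h1
      have hge : (0:ℝ) ≤ ∏ k : Fin K, (1 + ε * lam k * x k / Real.sin θ ^ 2)⁻¹ :=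
        Finset.prod_nonneg h0
      rw [Real.norm_eq_abs, abs_of_nonneg hge]
      exact hle
  refine ⟨orthant_convex K, fun x hx y hy a b ha hb hab => ?_⟩
  have hmem : a • x + b • y ∈ s := (orthant_convex K) hx hy ha hb hab
  have hpi : (0:ℝ) ≤ 1 / Real.pi := by positivity
  have hab' : (0:ℝ) ≤ Real.pi / 2 := by positivity
  -- pointwise convexity of the integrand
  have hpt : ∀ θ ∈ Icc (0:ℝ) (Real.pi / 2),
      (∏ k : Fin K, (1 + ε * lam k * (a • x + b • y) k / Real.sin θ ^ 2)⁻¹)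
        ≤ a * (∏ k : Fin K, (1 + ε * lam k * x k / Real.sin θ ^ 2)⁻¹)
          + b * (∏ k : Fin K, (1 + ε * lam k * y k / Real.sin θ ^ 2)⁻¹) := by
    intro θ _
    have hconv := prod_inv_convex K (fun k => ε * lam k / Real.sin θ ^ 2)
      (fun k => hcnn θ k)
    have h := hconv.2 hx hy ha hb hab
    simp only [smul_eq_mul] at h
    calc (∏ k : Fin K, (1 + ε * lam k * (a • x + b • y) k / Real.sin θ ^ 2)⁻¹)
        = ∏ k : Fin K, (1 + (ε * lam k / Real.sin θ ^ 2) * (a • x + b • y) k)⁻¹ := by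
          exact Finset.prod_congr rfl fun k _ => hrw θ _ k
      _ ≤ a * (∏ k : Fin K, (1 + (ε * lam k / Real.sin θ ^ 2) * x k)⁻¹)
          + b * (∏ k : Fin K, (1 + (ε * lam k / Real.sin θ ^ 2) * y k)⁻¹) := h
      _ = a * (∏ k : Fin K, (1 + ε * lam k * x k / Real.sin θ ^ 2)⁻¹)
          + b * (∏ k : Fin K, (1 + ε * lam k * y k / Real.sin θ ^ 2)⁻¹) := by
          rw [Finset.prod_congr rfl fun k _ => hrw θ x k,
            Finset.prod_congr rfl fun k _ => hrw θ y k]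
  have hintx := hint x hx
  have hinty := hint y hy
  have hintc := hint _ hmem
  have hintr : IntervalIntegrable
      (fun θ => a * (∏ k : Fin K, (1 + ε * lam k * x k / Real.sin θ ^ 2)⁻¹)
        + b * (∏ k : Fin K, (1 + ε * lam k * y k / Real.sin θ ^ 2)⁻¹))
      volume 0 (Real.pi / 2) :=
    (hintx.const_mul a).add (hinty.const_mul b)
  have hmono := intervalIntegral.integral_mono_on hab' hintc hintr hpt
  rw [intervalIntegral.integral_add (hintx.const_mul a) (hinty.const_mul b),
    intervalIntegral.integral_const_mul, intervalIntegral.integral_const_mul] at hmono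
  simp only [smul_eq_mul]
  nlinarith [hmono, hpi,
    mul_le_mul_of_nonneg_left hmono hpi]
end

section
/- Let M be a positive integer, let λ_1 ≥ λ_2 ≥ … ≥ λ_M > 0 and c > 0 be reals. Suppose M_0 ∈ {1, …, M} and set ν = (1/M_0)·(1 + (1/c)·Σ_{ℓ=1}^{M_0} 1/λ_ℓ). Assume ν − 1/(c·λ_{M_0}) > 0, and if M_0 < M assume ν − 1/(c·λ_{M_0+1}) ≤ 0. Define x* ∈ ℝ^M by x*_k = ν − 1/(c·λ_k) for k ≤ M_0 and x*_k = 0 for k > M_0. Then x* is feasible (x*_k ≥ 0 for all k and Σ_{k=1}^M x*_k = 1), and for every x ∈ ℝ^M with x_k ≥ 0 for all k and Σ_{k=1}^M x_k ≤ 1, one has ∏_{k=1}^M (1 + c·λ_k·x_k) ≤ ∏_{k=1}^M (1 + c·λ_k·x*_k). -/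
/-- **water-filling.** Let `λ₁ ≥ … ≥ λ_M > 0`, `c > 0`,
`ν = (1/M₀)(1 + (1/c) Σ_{ℓ=1}^{M₀} 1/λ_ℓ)` with `ν − 1/(cλ_{M₀}) > 0` and (when `M₀ < M`)
`ν − 1/(cλ_{M₀+1}) ≤ 0`. Define `x*_k = ν − 1/(cλ_k)` for `k ≤ M₀` and `x*_k = 0`
otherwise. Then `x*` is feasible (nonnegative, summing to `1`) and maximizes
`∏_k (1 + cλ_k x_k)` over all nonnegative `x` with `Σ_k x_k ≤ 1`. -/
theorem stmt18 (M : ℕ) (hM : 0 < M) (lam : Fin M → ℝ)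
    (hlam : Antitone lam) (hlam0 : ∀ k, 0 < lam k)
    (c : ℝ) (hc : 0 < c)
    (M₀ : ℕ) (hM₀1 : 1 ≤ M₀) (hM₀M : M₀ ≤ M)
    (ν : ℝ)
    (hν : ν = (1 / (M₀ : ℝ)) *
      (1 + (1 / c) * ∑ ℓ ∈ Finset.univ.filter (fun ℓ : Fin M => (ℓ : ℕ) < M₀),
        (lam ℓ)⁻¹))
    (hlast : 0 < ν - (c * lam ⟨M₀ - 1, by omega⟩)⁻¹)
    (hnext : ∀ hlt : M₀ < M, ν - (c * lam ⟨M₀, hlt⟩)⁻¹ ≤ 0)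
    (xstar : Fin M → ℝ)
    (hx : ∀ k : Fin M, xstar k = if (k : ℕ) < M₀ then ν - (c * lam k)⁻¹ else 0) :
    (∀ k, 0 ≤ xstar k) ∧ (∑ k, xstar k = 1) ∧
      ∀ x : Fin M → ℝ, (∀ k, 0 ≤ x k) → (∑ k, x k) ≤ 1 →
        (∏ k, (1 + c * lam k * x k)) ≤ ∏ k, (1 + c * lam k * xstar k) := by
  have hlam0' : ∀ k : Fin M, 0 < c * lam k := fun k => mul_pos hc (hlam0 k)
  have hinvpos : 0 < (c * lam ⟨M₀ - 1, by omega⟩)⁻¹ := inv_pos.mpr (hlam0' _)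
  have hν0 : 0 < ν := by linarith
  -- nonnegativity
  have hnn : ∀ k, 0 ≤ xstar k := by
    intro k
    rw [hx k]
    split_ifs with h
    · have hkle : (⟨M₀ - 1, by omega⟩ : Fin M) ≤ k → lam k ≤ lam ⟨M₀ - 1, by omega⟩ := fun h => hlam h
      have hle : lam ⟨M₀ - 1, by omega⟩ ≤ lam k := by
        apply hlam
        simp only [Fin.mk_le_mk, Fin.le_def]
        omega
      have h1 : (c * lam k)⁻¹ ≤ (c * lam ⟨M₀ - 1, by omega⟩)⁻¹ := by
        apply inv_anti₀ (hlam0' _)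
        nlinarith
      linarith
    · exact le_rfl
  -- the filter set
  set S := Finset.univ.filter (fun ℓ : Fin M => (ℓ : ℕ) < M₀) with hS
  have hScard : S.card = M₀ := by
    rw [hS]
    rw [show Finset.univ.filter (fun ℓ : Fin M => (ℓ : ℕ) < M₀)
        = Finset.map (Fin.castLEEmb hM₀M) Finset.univ by
      ext k
      simp only [Finset.mem_filter, Finset.mem_univ, true_and, Finset.mem_map,
        Fin.castLEEmb, Function.Embedding.coeFn_mk]
      constructor
      · intro h; exact ⟨⟨(k : ℕ), h⟩, rfl⟩
      · rintro ⟨j, rfl⟩; exact j.isLt]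
    simp
  have hsum : ∑ k, xstar k = 1 := by
    have : ∑ k, xstar k = ∑ k ∈ S, (ν - (c * lam k)⁻¹) := by
      rw [← Finset.sum_filter_add_sum_filter_not Finset.univ (fun ℓ : Fin M => (ℓ : ℕ) < M₀)
        xstar]
      have h1 : ∑ k ∈ Finset.univ.filter (fun ℓ : Fin M => ¬ (ℓ : ℕ) < M₀), xstar k = 0 := by
        apply Finset.sum_eq_zero
        intro k hk
        simp only [Finset.mem_filter] at hk
        rw [hx k, if_neg hk.2]
      rw [h1, add_zero]
      apply Finset.sum_congr rfl
      intro k hk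
      simp only [hS, Finset.mem_filter] at hk ⊢
      rw [hx k, if_pos hk.2]
    rw [this, Finset.sum_sub_distrib, Finset.sum_const, hScard, nsmul_eq_mul]
    have hinv : ∀ k : Fin M, (c * lam k)⁻¹ = (1 / c) * (lam k)⁻¹ := by
      intro k; rw [mul_inv, one_div]
    simp_rw [hinv]
    rw [← Finset.mul_sum]
    have hM₀pos : (0 : ℝ) < (M₀ : ℝ) := by exact_mod_cast hM₀1
    rw [hν]
    field_simp
    ring
  refine ⟨hnn, hsum, ?_⟩
  intro x hx0 hxs
  have hpos : ∀ k : Fin M, 0 < 1 + c * lam k * x k := by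
    intro k; nlinarith [hlam0' k, hx0 k]
  have hpos' : ∀ k : Fin M, 0 < 1 + c * lam k * xstar k := by
    intro k; nlinarith [hlam0' k, hnn k]
  -- key per-term inequality
  have key : ∀ k : Fin M, Real.log (1 + c * lam k * x k) ≤
      Real.log (1 + c * lam k * xstar k) + (x k - xstar k) / ν := by
    intro k
    have ha := hpos k
    have hb := hpos' k
    have hlog : Real.log (1 + c * lam k * x k) - Real.log (1 + c * lam k * xstar k) ≤
        (c * lam k * (x k - xstar k)) / (1 + c * lam k * xstar k) := by
      rw [← Real.log_div (ne_of_gt ha) (ne_of_gt hb)]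
      have h1 := Real.log_le_sub_one_of_pos (div_pos ha hb)
      have h2 : (1 + c * lam k * x k) / (1 + c * lam k * xstar k) - 1
          = (c * lam k * (x k - xstar k)) / (1 + c * lam k * xstar k) := by
        field_simp
        ring
      linarith [h2 ▸ h1]
    by_cases hk : (k : ℕ) < M₀
    · have hxs' : xstar k = ν - (c * lam k)⁻¹ := by rw [hx k, if_pos hk]
      have hb' : 1 + c * lam k * xstar k = c * lam k * ν := by
        rw [hxs', mul_sub, mul_inv_cancel₀ (ne_of_gt (hlam0' k))]
        ring
      have heq : (c * lam k * (x k - xstar k)) / (1 + c * lam k * xstar k)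
          = (x k - xstar k) / ν := by
        rw [hb', mul_comm (c * lam k) ν, ← div_div,
          mul_div_assoc, mul_comm, mul_div_assoc, div_self (ne_of_gt (hlam0' k)), mul_one]
      linarith [heq ▸ hlog]
    · have hxs' : xstar k = 0 := by rw [hx k, if_neg hk]
      have hkge : M₀ ≤ (k : ℕ) := le_of_not_gt hk
      have hMlt : M₀ < M := lt_of_le_of_lt hkge k.isLt
      have hle : lam k ≤ lam ⟨M₀, hMlt⟩ := by
        apply hlam
        simp only [Fin.le_def]
        exact hkge
      have hν2 : ν ≤ (c * lam ⟨M₀, hMlt⟩)⁻¹ := by linarith [hnext hMlt]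
      have h3 : c * lam ⟨M₀, hMlt⟩ * ν ≤ 1 := by
        have h := mul_le_mul_of_nonneg_left hν2 (le_of_lt (hlam0' ⟨M₀, hMlt⟩))
        rwa [mul_inv_cancel₀ (ne_of_gt (hlam0' ⟨M₀, hMlt⟩))] at h
      have h4 : c * lam k * ν ≤ 1 := by nlinarith [hlam0 k]
      have h5 : c * lam k ≤ 1 / ν := by
        rw [le_div_iff₀ hν0]; linarith
      have h6 : c * lam k * x k ≤ x k / ν := by
        rw [div_eq_mul_one_div]
        nlinarith [hx0 k, h5]
      rw [hxs'] at hlog ⊢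
      simp only [mul_zero, add_zero, sub_zero, mul_zero] at hlog ⊢
      have : (c * lam k * x k) / 1 = c * lam k * x k := by ring
      rw [this] at hlog
      linarith
  -- sum the inequalities
  have hsumlog : ∑ k, Real.log (1 + c * lam k * x k) ≤
      ∑ k, Real.log (1 + c * lam k * xstar k) := by
    have h1 : ∑ k, Real.log (1 + c * lam k * x k) ≤
        ∑ k, (Real.log (1 + c * lam k * xstar k) + (x k - xstar k) / ν) :=
      Finset.sum_le_sum fun k _ => key k
    have h2 : ∑ k, (Real.log (1 + c * lam k * xstar k) + (x k - xstar k) / ν)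
        = (∑ k, Real.log (1 + c * lam k * xstar k)) + ((∑ k, x k) - 1) / ν := by
      rw [Finset.sum_add_distrib]
      congr 1
      rw [← Finset.sum_div, Finset.sum_sub_distrib, hsum]
    have h3 : ((∑ k, x k) - 1) / ν ≤ 0 :=
      div_nonpos_of_nonpos_of_nonneg (by linarith) (le_of_lt hν0)
    rw [h2] at h1
    linarith
  -- conclude via exp
  have e1 : ∏ k, (1 + c * lam k * x k) = Real.exp (∑ k, Real.log (1 + c * lam k * x k)) := by
    rw [Real.exp_sum]
    exact Finset.prod_congr rfl fun k _ => (Real.exp_log (hpos k)).symm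
  have e2 : ∏ k, (1 + c * lam k * xstar k)
      = Real.exp (∑ k, Real.log (1 + c * lam k * xstar k)) := by
    rw [Real.exp_sum]
    exact Finset.prod_congr rfl fun k _ => (Real.exp_log (hpos' k)).symm
  rw [e1, e2]
  exact Real.exp_le_exp.mpr hsumlog
end
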